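/- arXiv:1307.2009 — 8 statements merged into one kernel-verified Lean document; each statement's English description precedes it below -/
import Mathlib

section
/- Let a ∈ ℝ^n lie in A_s and let δ > 0 satisfy δ < |a_j| for every index j with a_j ≠ 0. Then for every x in the closed ball of radius δ/2 around a, every projection x⁺ of x onto A_s (i.e., every x⁺ ∈ A_s with ‖x − x⁺‖ ≤ ‖x − z‖ for all z ∈ A_s) satisfies ‖x⁺ − a‖ ≤ δ/2; that is, P_{A_s} maps the ball B_{δ/2}(a) into itself. -/
/-- Number of nonzero entries of a vector (the ℓ₀-"norm"). -/
noncomputable def sparsity {n : ℕ} (x : EuclideanSpace ℝ (Fin n)) : ℕ :=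
  (Finset.univ.filter (fun i => x i ≠ 0)).card

/-- `A_s`, the set of vectors with at most `s` nonzero entries. -/
def Asp (n s : ℕ) : Set (EuclideanSpace ℝ (Fin n)) := {x | sparsity x ≤ s}

/-- The (possibly set-valued) projector onto a set `Ω`. -/
def projSet {n : ℕ} (Ω : Set (EuclideanSpace ℝ (Fin n))) (x : EuclideanSpace ℝ (Fin n)) :
    Set (EuclideanSpace ℝ (Fin n)) :=
  {y | y ∈ Ω ∧ ∀ z ∈ Ω, ‖x - y‖ ≤ ‖x - z‖}

namespace StmtAux

lemma sub_apply {n : ℕ} (u v : EuclideanSpace ℝ (Fin n)) (i : Fin n) :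
    (u - v) i = u i - v i := rfl

lemma norm_le_norm' {n : ℕ} (u v : EuclideanSpace ℝ (Fin n)) (h : ∀ i, |u i| ≤ |v i|) :
    ‖u‖ ≤ ‖v‖ := by
  rw [EuclideanSpace.norm_eq, EuclideanSpace.norm_eq]
  apply Real.sqrt_le_sqrt
  refine Finset.sum_le_sum fun i _ => ?_
  simp only [Real.norm_eq_abs]
  exact pow_le_pow_left₀ (abs_nonneg _) (h i) 2

lemma norm_lt_norm' {n : ℕ} (u v : EuclideanSpace ℝ (Fin n))
    (h : ∑ i, (u i) ^ 2 < ∑ i, (v i) ^ 2) : ‖u‖ < ‖v‖ := by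
  rw [EuclideanSpace.norm_eq, EuclideanSpace.norm_eq]
  apply Real.sqrt_lt_sqrt (by positivity)
  simpa [Real.norm_eq_abs, sq_abs] using h

lemma abs_coord_le {n : ℕ} (v : EuclideanSpace ℝ (Fin n)) (i : Fin n) : |v i| ≤ ‖v‖ := by
  rw [EuclideanSpace.norm_eq]
  have : |v i| = Real.sqrt ((v i) ^ 2) := by rw [Real.sqrt_sq_eq_abs]
  rw [this]
  apply Real.sqrt_le_sqrt
  have : (v i) ^ 2 = ‖v i‖ ^ 2 := by simp [Real.norm_eq_abs, sq_abs]
  rw [this]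
  exact Finset.single_le_sum (f := fun j => ‖v j‖ ^ 2) (fun j _ => by positivity)
    (Finset.mem_univ i)

end StmtAux

/-- The projector onto the sparsity set `A_s` maps `B_{δ/2}(a)` into itself. -/
theorem stmt0 {n s : ℕ} (a : EuclideanSpace ℝ (Fin n)) (ha : a ∈ Asp n s)
    (δ : ℝ) (hδ : 0 < δ) (hsmall : ∀ j, a j ≠ 0 → δ < |a j|) :
    ∀ x ∈ Metric.closedBall a (δ / 2), ∀ xp ∈ projSet (Asp n s) x,
      ‖xp - a‖ ≤ δ / 2 := by
  intro x hx xp hxp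
  obtain ⟨hxpA, hxpmin⟩ := hxp
  have hxa : ‖x - a‖ ≤ δ / 2 := by
    rw [← dist_eq_norm]; exact Metric.mem_closedBall.mp hx
  have hcoord : ∀ i, |x i - a i| ≤ δ / 2 := fun i => by
    have := StmtAux.abs_coord_le (x - a) i
    rw [StmtAux.sub_apply] at this
    linarith
  -- entries of a's support in x are big, off-support entries are small
  have hbig : ∀ j, a j ≠ 0 → δ / 2 < |x j| := by
    intro j hj
    have h1 := hsmall j hj
    have h2 := hcoord j
    have := abs_sub_abs_le_abs_sub (a j) (x j)
    rw [abs_sub_comm (a j) (x j)] at this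
    linarith
  have hsmallx : ∀ j, a j = 0 → |x j| ≤ δ / 2 := fun j hj => by
    have := hcoord j; rw [hj, sub_zero] at this; exact this
  -- Claim 1: each entry of xp is 0 or x j
  have claim1 : ∀ j, xp j = 0 ∨ xp j = x j := by
    intro j
    by_contra hcon
    push_neg at hcon
    obtain ⟨h0, hne⟩ := hcon
    set z : EuclideanSpace ℝ (Fin n) := WithLp.toLp 2 (Function.update xp j (x j)) with hz
    have hzA : z ∈ Asp n s := by
      refine le_trans (Finset.card_le_card ?_) hxpA
      intro i hi
      simp only [Finset.mem_filter, Finset.mem_univ, true_and] at hi ⊢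
      rcases eq_or_ne i j with rfl | hij
      · exact h0
      · rwa [hz, WithLp.ofLp_toLp, Function.update_of_ne hij] at hi
    have hlt : ‖x - z‖ < ‖x - xp‖ := by
      apply StmtAux.norm_lt_norm'
      simp only [StmtAux.sub_apply]
      have hsplit : ∀ (w : EuclideanSpace ℝ (Fin n)),
          ∑ i, (x i - w i) ^ 2
            = (∑ i ∈ Finset.univ.erase j, (x i - w i) ^ 2) + (x j - w j) ^ 2 := by
        intro w
        rw [Finset.sum_erase_add _ _ (Finset.mem_univ j)]
      rw [hsplit z, hsplit xp]
      have heq : ∑ i ∈ Finset.univ.erase j, (x i - z i) ^ 2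
          = ∑ i ∈ Finset.univ.erase j, (x i - xp i) ^ 2 := by
        refine Finset.sum_congr rfl fun i hi => ?_
        have hij : i ≠ j := Finset.ne_of_mem_erase hi
        simp only [hz, PiLp.toLp_apply, Function.update_of_ne hij]
      rw [heq]; simp only [hz, PiLp.toLp_apply, Function.update_self]
      have hne' : x j - xp j ≠ 0 := sub_ne_zero.mpr (Ne.symm hne)
      have : (0:ℝ) < (x j - xp j) ^ 2 := by positivity
      simp only [sub_self]
      linarith [this, sq_nonneg (x j - xp j)]
    exact absurd (hxpmin z hzA) (not_le.mpr hlt)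
  -- Claim 2: on supp a, xp agrees with x
  have claim2 : ∀ j, a j ≠ 0 → xp j = x j := by
    intro j hj
    rcases claim1 j with hj0 | hjx
    · -- xp j = 0 : derive contradiction
      exfalso
      have hxj : δ / 2 < |x j| := hbig j hj
      have hxjne : x j ≠ 0 := by
        intro h; rw [h, abs_zero] at hxj; linarith
      by_cases hsub : ∀ k, xp k ≠ 0 → a k ≠ 0
      · -- supp xp ⊊ supp a, so sparsity xp < s; add j
        have hsupp : Finset.univ.filter (fun i => xp i ≠ 0)
            ⊂ Finset.univ.filter (fun i => a i ≠ 0) := by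
          constructor
          · intro i hi
            simp only [Finset.mem_filter, Finset.mem_univ, true_and] at hi ⊢
            exact hsub i hi
          · intro hcon
            have : j ∈ Finset.univ.filter (fun i => xp i ≠ 0) := by
              apply hcon
              simp only [Finset.mem_filter, Finset.mem_univ, true_and]
              exact hj
            simp only [Finset.mem_filter, Finset.mem_univ, true_and] at this
            exact this hj0
        have hcard : sparsity xp < s :=
          lt_of_lt_of_le (Finset.card_lt_card hsupp) ha
        set z : EuclideanSpace ℝ (Fin n) := WithLp.toLp 2 (Function.update xp j (x j)) with hz
        have hzA : z ∈ Asp n s := by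
          have hsub2 : Finset.univ.filter (fun i => z i ≠ 0)
              ⊆ insert j (Finset.univ.filter (fun i => xp i ≠ 0)) := by
            intro i hi
            simp only [Finset.mem_filter, Finset.mem_univ, true_and] at hi
            rcases eq_or_ne i j with rfl | hij
            · exact Finset.mem_insert_self _ _
            · rw [hz, WithLp.ofLp_toLp, Function.update_of_ne hij] at hi
              exact Finset.mem_insert_of_mem (by simp [hi])
          calc sparsity z ≤ (insert j (Finset.univ.filter (fun i => xp i ≠ 0))).card :=
                Finset.card_le_card hsub2
            _ ≤ sparsity xp + 1 := Finset.card_insert_le _ _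
            _ ≤ s := hcard
        have hlt : ‖x - z‖ < ‖x - xp‖ := by
          apply StmtAux.norm_lt_norm'
          simp only [StmtAux.sub_apply]
          have hsplit : ∀ (w : EuclideanSpace ℝ (Fin n)),
              ∑ i, (x i - w i) ^ 2
                = (∑ i ∈ Finset.univ.erase j, (x i - w i) ^ 2) + (x j - w j) ^ 2 := by
            intro w
            rw [Finset.sum_erase_add _ _ (Finset.mem_univ j)]
          rw [hsplit z, hsplit xp]
          have heq : ∑ i ∈ Finset.univ.erase j, (x i - z i) ^ 2
              = ∑ i ∈ Finset.univ.erase j, (x i - xp i) ^ 2 := by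
            refine Finset.sum_congr rfl fun i hi => ?_
            simp only [hz, PiLp.toLp_apply, Function.update_of_ne (Finset.ne_of_mem_erase hi)]
          rw [heq]; simp only [hz, PiLp.toLp_apply, Function.update_self]; rw [hj0]
          have : (0:ℝ) < (x j) ^ 2 := by positivity
          simp only [sub_self, sub_zero]
          linarith
        exact absurd (hxpmin z hzA) (not_le.mpr hlt)
      · -- there is k in supp xp with a k = 0; swap j for k
        push_neg at hsub
        obtain ⟨k, hk0, hak⟩ := hsub
        have hjk : j ≠ k := fun h => hj (h ▸ hak)
        have hxpk : xp k = x k := by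
          rcases claim1 k with h | h
          · exact absurd h hk0
          · exact h
        have hxk : |x k| ≤ δ / 2 := hsmallx k hak
        set z : EuclideanSpace ℝ (Fin n) :=
          WithLp.toLp 2 (Function.update (Function.update xp k 0) j (x j)) with hz
        have hzj : z j = x j := by rw [hz, WithLp.ofLp_toLp, Function.update_self]
        have hzk : z k = 0 := by
          rw [hz, WithLp.ofLp_toLp, Function.update_of_ne (Ne.symm hjk), Function.update_self]
        have hzother : ∀ i, i ≠ j → i ≠ k → z i = xp i := by
          intro i hij hik
          rw [hz, WithLp.ofLp_toLp, Function.update_of_ne hij, Function.update_of_ne hik]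
        have hzA : z ∈ Asp n s := by
          have hkmem : k ∈ Finset.univ.filter (fun i => xp i ≠ 0) := by
            simp only [Finset.mem_filter, Finset.mem_univ, true_and]; exact hk0
          have hsub2 : Finset.univ.filter (fun i => z i ≠ 0)
              ⊆ insert j ((Finset.univ.filter (fun i => xp i ≠ 0)).erase k) := by
            intro i hi
            simp only [Finset.mem_filter, Finset.mem_univ, true_and] at hi
            rcases eq_or_ne i j with rfl | hij
            · exact Finset.mem_insert_self _ _
            · rcases eq_or_ne i k with rfl | hik
              · exact absurd hzk hi
              · refine Finset.mem_insert_of_mem (Finset.mem_erase.mpr ⟨hik, ?_⟩)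
                rw [hzother i hij hik] at hi
                simp only [Finset.mem_filter, Finset.mem_univ, true_and]
                exact hi
          calc sparsity z
              ≤ (insert j ((Finset.univ.filter (fun i => xp i ≠ 0)).erase k)).card :=
                Finset.card_le_card hsub2
            _ ≤ ((Finset.univ.filter (fun i => xp i ≠ 0)).erase k).card + 1 :=
                Finset.card_insert_le _ _
            _ = sparsity xp := by
                rw [Finset.card_erase_of_mem hkmem]
                have h1 : 1 ≤ (Finset.univ.filter (fun i => xp i ≠ 0)).card :=
                  Finset.card_pos.mpr ⟨k, hkmem⟩
                unfold sparsity
                omega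
            _ ≤ s := hxpA
        have hlt : ‖x - z‖ < ‖x - xp‖ := by
          apply StmtAux.norm_lt_norm'
          simp only [StmtAux.sub_apply]
          have hkmem : k ∈ Finset.univ.erase j :=
            Finset.mem_erase.mpr ⟨Ne.symm hjk, Finset.mem_univ k⟩
          have hsplit : ∀ (w : EuclideanSpace ℝ (Fin n)),
              ∑ i, (x i - w i) ^ 2
                = (∑ i ∈ (Finset.univ.erase j).erase k, (x i - w i) ^ 2)
                  + (x k - w k) ^ 2 + (x j - w j) ^ 2 := by
            intro w
            rw [Finset.sum_erase_add _ _ hkmem, Finset.sum_erase_add _ _ (Finset.mem_univ j)]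
          rw [hsplit z, hsplit xp]
          have heq : ∑ i ∈ (Finset.univ.erase j).erase k, (x i - z i) ^ 2
              = ∑ i ∈ (Finset.univ.erase j).erase k, (x i - xp i) ^ 2 := by
            refine Finset.sum_congr rfl fun i hi => ?_
            have hik : i ≠ k := Finset.ne_of_mem_erase hi
            have hij : i ≠ j := Finset.ne_of_mem_erase (Finset.mem_of_mem_erase hi)
            rw [hzother i hij hik]
          rw [heq, hzj, hzk, hxpk, hj0]
          have h1 : (x k) ^ 2 < (x j) ^ 2 := by
            have := hbig j hj
            have h2 : (x k) ^ 2 ≤ (δ / 2) ^ 2 := by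
              rw [← sq_abs (x k)]
              exact pow_le_pow_left₀ (abs_nonneg _) hxk 2
            have h3 : (δ / 2) ^ 2 < (x j) ^ 2 := by
              rw [← sq_abs (x j)]
              apply pow_lt_pow_left₀ this (by positivity)
              norm_num
            linarith
          simp only [sub_self, sub_zero]
          linarith
        exact absurd (hxpmin z hzA) (not_le.mpr hlt)
    · exact hjx
  -- conclude: componentwise comparison
  have hfinal : ∀ i, |xp i - a i| ≤ |x i - a i| := by
    intro i
    by_cases hi : a i = 0
    · rcases claim1 i with h | h
      · rw [h, hi]; simp
      · rw [h]
    · rw [claim2 i hi]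
  calc ‖xp - a‖ ≤ ‖x - a‖ := by
        apply StmtAux.norm_le_norm'
        intro i
        simp only [StmtAux.sub_apply]
        exact hfinal i
    _ ≤ δ / 2 := hxa
end

section
/- Let a ∈ ℝ^n lie in A_s and let δ > 0 satisfy δ < |a_j| for every index j with a_j ≠ 0. Then for every x in the closed ball of radius δ/2 around a, every reflection y ∈ R_{A_s}(x) = 2P_{A_s}(x) − x (i.e., y = 2x⁺ − x for some projection x⁺ of x onto A_s) satisfies ‖y − a‖ ≤ δ/2; that is, the reflector R_{A_s} maps the ball B_{δ/2}(a) into itself. -/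
private lemma euc_norm_eq {n : ℕ} (v : EuclideanSpace ℝ (Fin n)) :
    ‖v‖ = Real.sqrt (∑ i, (v i)^2) := by
  rw [EuclideanSpace.norm_eq]; congr 1; apply Finset.sum_congr rfl; intro i _
  rw [Real.norm_eq_abs, sq_abs]

private lemma euc_coord_le {n : ℕ} (v : EuclideanSpace ℝ (Fin n)) (i : Fin n) :
    |v i| ≤ ‖v‖ := by
  rw [EuclideanSpace.norm_eq, ← Real.sqrt_sq_eq_abs]
  apply Real.sqrt_le_sqrt
  have := Finset.single_le_sum (f := fun j => ‖v j‖^2) (fun j _ => sq_nonneg _) (Finset.mem_univ i)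
  simpa [Real.norm_eq_abs, sq_abs] using this

/-- The reflector across the sparsity set `A_s` maps `B_{δ/2}(a)` into itself:
every reflection `y = 2x⁺ - x` with `x⁺` a projection of `x` onto `A_s` stays in the ball. -/
theorem stmt1 {n s : ℕ} (a : EuclideanSpace ℝ (Fin n)) (ha : a ∈ Asp n s)
    (δ : ℝ) (hδ : 0 < δ) (hsmall : ∀ j, a j ≠ 0 → δ < |a j|) :
    ∀ x ∈ Metric.closedBall a (δ / 2), ∀ xp ∈ projSet (Asp n s) x,
      ‖((2:ℝ) • xp - x) - a‖ ≤ δ / 2 := by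
  intro x hx xp hxp
  obtain ⟨hxpA, hmin⟩ := hxp
  have hxa : ‖x - a‖ ≤ δ / 2 := by
    rw [Metric.mem_closedBall, dist_eq_norm] at hx; exact hx
  -- coordinatewise bound
  have hcoord : ∀ i, |x i - a i| ≤ δ / 2 := by
    intro i
    have := euc_coord_le (x - a) i
    simp only [PiLp.sub_apply] at this
    exact this.trans hxa
  -- sum-of-squares form of minimality
  set Q : EuclideanSpace ℝ (Fin n) → ℝ := fun v => ∑ i, (x i - v i)^2 with hQdef
  have hQnonneg : ∀ v, 0 ≤ Q v := fun v => Finset.sum_nonneg fun i _ => sq_nonneg _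
  have hnorm : ∀ v : EuclideanSpace ℝ (Fin n), ‖x - v‖ = Real.sqrt (Q v) := by
    intro v
    rw [euc_norm_eq]
    congr 1
  have hminQ : ∀ z ∈ Asp n s, Q xp ≤ Q z := by
    intro z hz
    have := hmin z hz
    rw [hnorm, hnorm] at this
    calc Q xp = Real.sqrt (Q xp) ^ 2 := (Real.sq_sqrt (hQnonneg xp)).symm
      _ ≤ Real.sqrt (Q z) ^ 2 := by
          apply pow_le_pow_left₀ (Real.sqrt_nonneg _) this
      _ = Q z := Real.sq_sqrt (hQnonneg z)
  -- Step B : each coordinate of xp is 0 or x i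
  have hB : ∀ i, xp i = 0 ∨ xp i = x i := by
    by_contra hcon
    push_neg at hcon
    obtain ⟨i₀, hi₀0, hi₀x⟩ := hcon
    set z : EuclideanSpace ℝ (Fin n) :=
      (WithLp.equiv 2 (Fin n → ℝ)).symm (fun i => if xp i = 0 then 0 else x i) with hzdef
    have hzco : ∀ i, z i = if xp i = 0 then 0 else x i := fun i => rfl
    have hzA : z ∈ Asp n s := by
      refine le_trans (Finset.card_le_card ?_) hxpA
      intro i hi
      simp only [Finset.mem_filter, Finset.mem_univ, true_and] at hi ⊢
      intro h0
      exact hi (by rw [hzco, if_pos h0])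
    have hle : ∀ i ∈ Finset.univ, (x i - z i)^2 ≤ (x i - xp i)^2 := by
      intro i _
      rw [hzco]
      by_cases h : xp i = 0
      · rw [if_pos h, h]
      · rw [if_neg h]; simpa using sq_nonneg _
    have hlt : (x i₀ - z i₀)^2 < (x i₀ - xp i₀)^2 := by
      rw [hzco, if_neg hi₀0]
      have : x i₀ - xp i₀ ≠ 0 := fun h => hi₀x (by linarith [sub_eq_zero.mp h])
      simpa using (sq_pos_of_ne_zero this)
    have : Q z < Q xp := Finset.sum_lt_sum hle ⟨i₀, Finset.mem_univ _, hlt⟩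
    exact absurd (hminQ z hzA) (not_le.mpr this)
  -- Step C : support of a is kept
  have hC : ∀ j, a j ≠ 0 → xp j ≠ 0 := by
    intro j haj hxpj
    have hxj : δ / 2 < |x j| := by
      have h1 := hsmall j haj
      have h2 := hcoord j
      have : |a j| ≤ |x j| + |x j - a j| := by
        have := abs_sub_abs_le_abs_sub (a j) (x j)
        rw [abs_sub_comm] at this
        linarith
      linarith
    have hxjne : x j ≠ 0 := fun h => by rw [h, abs_zero] at hxj; linarith
    set S := Finset.univ.filter (fun i => xp i ≠ 0) with hSdef
    have hjS : j ∉ S := by simp [hSdef, hxpj]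
    have hScard : S.card ≤ s := hxpA
    by_cases hfull : S.card = s
    · -- exchange argument: find k ∈ S with a k = 0
      obtain ⟨k, hkS, hak⟩ : ∃ k ∈ S, a k = 0 := by
        by_contra hc
        push_neg at hc
        have hsub : S ⊆ Finset.univ.filter (fun i => a i ≠ 0) := by
          intro i hi
          simp only [Finset.mem_filter, Finset.mem_univ, true_and]
          exact hc i hi
        have : S = Finset.univ.filter (fun i => a i ≠ 0) :=
          Finset.eq_of_subset_of_card_le hsub (le_trans ha (le_of_eq hfull.symm))
        have : j ∈ S := by rw [this]; simp [haj]
        exact hjS this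
      have hjk : j ≠ k := fun h => hjS (h ▸ hkS)
      have hxpk : xp k ≠ 0 := by simpa [hSdef] using hkS
      have hxpkx : xp k = x k := (hB k).resolve_left hxpk
      have hxk : |x k| ≤ δ / 2 := by
        have := hcoord k; rwa [hak, sub_zero] at this
      set z : EuclideanSpace ℝ (Fin n) :=
        (WithLp.equiv 2 (Fin n → ℝ)).symm
          (fun i => if i = j then x j else if i = k then 0 else xp i) with hzdef
      have hzco : ∀ i, z i = if i = j then x j else if i = k then 0 else xp i := fun i => rfl
      have hzA : z ∈ Asp n s := by
        have hsub : Finset.univ.filter (fun i => z i ≠ 0) ⊆ insert j (S.erase k) := by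
          intro i hi
          simp only [Finset.mem_filter, Finset.mem_univ, true_and] at hi
          rw [hzco] at hi
          by_cases hij : i = j
          · simp [hij]
          · rw [if_neg hij] at hi
            by_cases hik : i = k
            · rw [if_pos hik] at hi; exact absurd rfl hi
            · rw [if_neg hik] at hi
              exact Finset.mem_insert_of_mem (Finset.mem_erase.mpr ⟨hik, by simp [hSdef, hi]⟩)
        calc sparsity z ≤ (insert j (S.erase k)).card := Finset.card_le_card hsub
          _ ≤ (S.erase k).card + 1 := Finset.card_insert_le _ _
          _ = (S.card - 1) + 1 := by rw [Finset.card_erase_of_mem hkS]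
          _ = S.card := Nat.succ_pred_eq_of_pos (Finset.card_pos.mpr ⟨k, hkS⟩)
          _ ≤ s := hScard
      -- Q z = Q xp - (x j)^2 + (x k)^2
      have hQz : Q z = Q xp - (x j)^2 + (x k)^2 := by
        have hterm : ∀ i ∈ Finset.univ, (x i - z i)^2 =
            (x i - xp i)^2 - (if i = j then (x j)^2 else 0) + (if i = k then (x k)^2 else 0) := by
          intro i _
          rw [hzco]
          by_cases hij : i = j
          · subst hij
            rw [if_pos rfl, if_pos rfl, if_neg hjk, hxpj]
            ring
          · rw [if_neg hij, if_neg hij]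
            by_cases hik : i = k
            · subst hik
              rw [if_pos rfl, if_pos rfl, hxpkx]
              ring
            · rw [if_neg hik, if_neg hik]
              ring
        rw [hQdef]
        simp only [Finset.sum_congr rfl hterm]
        rw [Finset.sum_add_distrib, Finset.sum_sub_distrib]
        simp [Finset.sum_ite_eq', hQdef]
      have hsq : (x k)^2 < (x j)^2 := by
        have h1 : |x k| < |x j| := lt_of_le_of_lt hxk hxj
        calc (x k)^2 = |x k|^2 := (sq_abs _).symm
          _ < |x j|^2 := by
              apply pow_lt_pow_left₀ h1 (abs_nonneg _)
              norm_num
          _ = (x j)^2 := sq_abs _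
      have : Q z < Q xp := by rw [hQz]; linarith
      exact absurd (hminQ z hzA) (not_le.mpr this)
    · -- room to add j
      have hlt' : S.card < s := lt_of_le_of_ne hScard hfull
      set z : EuclideanSpace ℝ (Fin n) :=
        (WithLp.equiv 2 (Fin n → ℝ)).symm (fun i => if i = j then x j else xp i) with hzdef
      have hzco : ∀ i, z i = if i = j then x j else xp i := fun i => rfl
      have hzA : z ∈ Asp n s := by
        have hsub : Finset.univ.filter (fun i => z i ≠ 0) ⊆ insert j S := by
          intro i hi
          simp only [Finset.mem_filter, Finset.mem_univ, true_and] at hi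
          rw [hzco] at hi
          by_cases hij : i = j
          · simp [hij]
          · rw [if_neg hij] at hi
            exact Finset.mem_insert_of_mem (by simp [hSdef, hi])
        calc sparsity z ≤ (insert j S).card := Finset.card_le_card hsub
          _ ≤ S.card + 1 := Finset.card_insert_le _ _
          _ ≤ s := hlt'
      have hle : ∀ i ∈ Finset.univ, (x i - z i)^2 ≤ (x i - xp i)^2 := by
        intro i _
        rw [hzco]
        by_cases hij : i = j
        · subst hij; rw [if_pos rfl, hxpj]; simpa using sq_nonneg _
        · rw [if_neg hij]
      have hltj : (x j - z j)^2 < (x j - xp j)^2 := by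
        rw [hzco, if_pos rfl, hxpj, sub_self, sub_zero]
        simpa using sq_pos_of_ne_zero hxjne
      have : Q z < Q xp := Finset.sum_lt_sum hle ⟨j, Finset.mem_univ _, hltj⟩
      exact absurd (hminQ z hzA) (not_le.mpr this)
  -- Step D : conclude
  have hfinal : ‖((2:ℝ) • xp - x) - a‖ = ‖x - a‖ := by
    rw [euc_norm_eq, euc_norm_eq]
    congr 1
    apply Finset.sum_congr rfl
    intro i _
    have hi : (((2:ℝ) • xp - x) - a) i = 2 * xp i - x i - a i := by
      simp [PiLp.sub_apply, PiLp.smul_apply]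
    have hi2 : ((x : EuclideanSpace ℝ (Fin n)) - a) i = x i - a i := by
      simp [PiLp.sub_apply]
    rw [hi, hi2]
    by_cases hai : a i = 0
    · rcases hB i with h0 | hx0
      · rw [h0, hai]; ring
      · rw [hx0, hai]; ring
    · rw [(hB i).resolve_left (hC i hai)]; ring
  rw [hfinal]
  exact hxa
end

section
/- Let x̄ ∈ A_s with x̄ ≠ 0 and let 0 < δ < min{|x̄_j| : x̄_j ≠ 0}. Then for every x ∈ A_s with ‖x − x̄‖ ≤ δ, every index set J of cardinality s with I(x) ⊆ J, and every vector v orthogonal to the coordinate subspace A_J (i.e., v_i = 0 is not required, but ⟨v, e_i⟩ = 0 for all i ∈ J), one has ⟨v, x̄ − x⟩ = 0. In particular, A_s is (0,δ)-subregular at x̄: ⟨v, x̄ − x⟩ ≤ 0 for every such normal vector v to A_s at x. -/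
open scoped InnerProductSpace

lemma coord_le_norm {n : ℕ} (y : EuclideanSpace ℝ (Fin n)) (i : Fin n) :
    |y i| ≤ ‖y‖ := by
  rw [EuclideanSpace.norm_eq]
  have h1 : |y i| = Real.sqrt (‖y i‖ ^ 2) := by
    rw [Real.sqrt_sq_eq_abs]; simp [abs_abs]
  rw [h1]
  apply Real.sqrt_le_sqrt
  exact Finset.single_le_sum (f := fun j => ‖y j‖ ^ 2)
    (fun j _ => by positivity) (Finset.mem_univ i)

/-- `(0,δ)`-subregularity of `A_s` at `x̄ ≠ 0` for `δ < min{|x̄_j| : x̄_j ≠ 0}`: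
for any `x ∈ A_s` with `‖x - x̄‖ ≤ δ`, any index set `J` of cardinality `s` containing the
support of `x`, and any `v` orthogonal to `A_J` (i.e. `⟪v, e_i⟫ = 0` for all `i ∈ J`),
one has `⟪v, x̄ - x⟫ = 0`. -/
theorem stmt4 {n s : ℕ} (xb : EuclideanSpace ℝ (Fin n))
    (hxb : xb ∈ Asp n s) (hne : xb ≠ 0)
    (δ : ℝ) (hδ : 0 < δ) (hsmall : ∀ j, xb j ≠ 0 → δ < |xb j|) :
    ∀ x ∈ Asp n s, ‖x - xb‖ ≤ δ →
      ∀ J : Finset (Fin n), J.card = s → (∀ i, x i ≠ 0 → i ∈ J) →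
        ∀ v : EuclideanSpace ℝ (Fin n),
          (∀ i ∈ J, ⟪v, EuclideanSpace.single i (1:ℝ)⟫_ℝ = 0) →
          ⟪v, xb - x⟫_ℝ = 0 := by
  intro x hx hdist J hJcard hJsupp v hv
  -- v i = 0 for i ∈ J
  have hvJ : ∀ i ∈ J, v i = 0 := by
    intro i hi
    have := hv i hi
    rwa [EuclideanSpace.inner_single_right, one_mul, RCLike.conj_to_real] at this
  -- xb i - x i = 0 for i ∉ J
  have hout : ∀ i, i ∉ J → xb i - x i = 0 := by
    intro i hi
    have hxi : x i = 0 := by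
      by_contra h; exact hi (hJsupp i h)
    have hxbi : xb i = 0 := by
      by_contra h
      have h1 := hsmall i h
      have h2 : |(x - xb) i| ≤ ‖x - xb‖ := coord_le_norm _ _
      have h3 : (x - xb) i = x i - xb i := rfl
      rw [h3, hxi, zero_sub, abs_neg] at h2
      linarith [le_trans h2 hdist]
    rw [hxi, hxbi, sub_zero]
  rw [PiLp.inner_apply]
  apply Finset.sum_eq_zero
  intro i _
  by_cases hi : i ∈ J
  · simp [hvJ i hi]
  · have h3 : (xb - x) i = xb i - x i := rfl
    simp [h3, hout i hi]
end

section
/- Let 1 ≤ s ≤ n − 1 and let x̄ ∈ A_s with x̄ ≠ 0. For every δ ≥ min{|x̄_j| : x̄_j ≠ 0} there exist a point x ∈ A_s with ‖x − x̄‖ ≤ δ, an index set J of cardinality s with I(x) ⊆ J, and a vector v in A_J^⊥ (the orthogonal complement of the coordinate subspace A_J) such that ⟨v, x̄ − x⟩ > 0. That is, A_s fails to be (0,δ)-subregular at x̄ for any such δ. -/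
open scoped InnerProductSpace

/-- `A_J`, the coordinate subspace spanned by the standard unit vectors `e_i`, `i ∈ J`. -/
def AJ {n : ℕ} (J : Finset (Fin n)) : Submodule ℝ (EuclideanSpace ℝ (Fin n)) :=
  Submodule.span ℝ ((fun i => EuclideanSpace.single i (1:ℝ)) '' ↑J)

/-- Failure of `(0,δ)`-subregularity of `A_s` at `x̄ ≠ 0` for any
`δ ≥ min{|x̄_j| : x̄_j ≠ 0}` (expressed as: some nonzero entry of `x̄` has `|x̄_j| ≤ δ`):
there are `x ∈ A_s` with `‖x - x̄‖ ≤ δ`, an index set `J` of cardinality `s` containing the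
support of `x`, and a normal vector `v ∈ A_J^⊥` with `⟪v, x̄ - x⟫ > 0`. -/
theorem stmt5 {n s : ℕ} (hs1 : 1 ≤ s) (hsn : s + 1 ≤ n)
    (xb : EuclideanSpace ℝ (Fin n)) (hxb : xb ∈ Asp n s) (hne : xb ≠ 0)
    (δ : ℝ) (hδ : ∃ j, xb j ≠ 0 ∧ |xb j| ≤ δ) :
    ∃ x ∈ Asp n s, ‖x - xb‖ ≤ δ ∧
      ∃ J : Finset (Fin n), J.card = s ∧ (∀ i, x i ≠ 0 → i ∈ J) ∧
        ∃ v ∈ (AJ J)ᗮ, ⟪v, xb - x⟫_ℝ > 0 := by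

  obtain ⟨j, hj, hjδ⟩ := hδ
  set x : EuclideanSpace ℝ (Fin n) := xb - EuclideanSpace.single j (xb j) with hx
  have hxi : ∀ i, x i = if i = j then 0 else xb i := by
    intro i
    simp only [hx, PiLp.sub_apply, EuclideanSpace.single_apply]
    by_cases h : i = j
    · subst h; simp
    · simp [h]
  have hxj : x j = 0 := by simp [hxi]
  -- support of x
  have hsupp : (Finset.univ.filter (fun i => x i ≠ 0)) =
      (Finset.univ.filter (fun i => xb i ≠ 0)).erase j := by
    ext i
    simp only [Finset.mem_filter, Finset.mem_erase, Finset.mem_univ, true_and]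
    constructor
    · intro h
      have hij : i ≠ j := by rintro rfl; exact h hxj
      refine ⟨hij, ?_⟩
      rw [hxi] at h; simpa [hij] using h
    · rintro ⟨hij, h⟩
      rw [hxi]; simpa [hij] using h
  have hjmem : j ∈ (Finset.univ.filter (fun i => xb i ≠ 0)) := by
    simp [hj]
  have hcard : (Finset.univ.filter (fun i => x i ≠ 0)).card ≤ s - 1 := by
    rw [hsupp, Finset.card_erase_of_mem hjmem]
    exact Nat.sub_le_sub_right hxb 1
  have hxAs : x ∈ Asp n s := by
    refine le_trans hcard ?_
    omega
  -- choose J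
  have hTsub : (Finset.univ.filter (fun i => x i ≠ 0)) ⊆ Finset.univ.erase j := by
    intro i hi
    rw [hsupp] at hi
    exact Finset.mem_erase.2 ⟨(Finset.mem_erase.1 hi).1, Finset.mem_univ i⟩
  have hcard2 : s ≤ (Finset.univ.erase j : Finset (Fin n)).card := by
    rw [Finset.card_erase_of_mem (Finset.mem_univ j), Finset.card_univ, Fintype.card_fin]
    omega
  obtain ⟨J, hTJ, hJsub, hJcard⟩ :=
    Finset.exists_subsuperset_card_eq hTsub (le_trans hcard (by omega)) hcard2
  refine ⟨x, hxAs, ?_, J, hJcard, ?_, EuclideanSpace.single j (xb j), ?_, ?_⟩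
  · have : x - xb = -(EuclideanSpace.single j (xb j)) := by
      simp [hx]
    rw [this, norm_neg, EuclideanSpace.norm_single]
    simpa using hjδ
  · intro i hi
    exact hTJ (Finset.mem_filter.2 ⟨Finset.mem_univ i, hi⟩)
  · rw [Submodule.mem_orthogonal]
    intro u hu
    refine Submodule.span_induction ?_ ?_ ?_ ?_ hu
    · rintro _ ⟨i, hi, rfl⟩
      have hij : i ≠ j := by
        have := Finset.mem_erase.1 (hJsub hi)
        exact this.1
      rw [EuclideanSpace.inner_single_left]
      simp [EuclideanSpace.single_apply, hij]
    · simp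
    · intro a b _ _ ha hb; rw [inner_add_left, ha, hb, add_zero]
    · intro c a _ ha; rw [inner_smul_left, ha, mul_zero]
  · have : xb - x = EuclideanSpace.single j (xb j) := by simp [hx]
    rw [this, real_inner_self_eq_norm_sq, EuclideanSpace.norm_single]
    exact pow_pos (norm_pos_iff.mpr hj) 2
end

section
/- Let Ω₁, …, Ω_m, Ω_{m+1} be nonempty closed subsets of ℝ^n, let x̄ ∈ (Ω₁ ∩ ⋯ ∩ Ω_m) ∩ Ω_{m+1}, and let δ > 0. Suppose that for each j ∈ {1,…,m} there is a constant κ_j > 0 such that dist(x, Ω_j ∩ Ω_{m+1}) ≤ κ_j · max(dist(x, Ω_j), dist(x, Ω_{m+1})) for all x in the closed ball B_δ(x̄). Then with κ̄ = max_{j} κ_j, the pair (⋃_{j=1}^m Ω_j, Ω_{m+1}) is locally linearly regular with modulus κ̄ on B_δ(x̄): dist(x, (⋃_{j=1}^m Ω_j) ∩ Ω_{m+1}) ≤ κ̄ · max(dist(x, ⋃_{j=1}^m Ω_j), dist(x, Ω_{m+1})) for all x ∈ B_δ(x̄). -/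
/-- Local linear regularity is preserved under finite unions: if each pair `(Ω j, Ω')` is
locally linearly regular with modulus `κ j` on the ball `B_δ(x̄)`, then the pair
`(⋃ j, Ω j, Ω')` is locally linearly regular there with modulus `κ̄ = max_j κ j`. -/
theorem stmt6 {n m : ℕ} (hm : 0 < m)
    (Ω : Fin m → Set (EuclideanSpace ℝ (Fin n))) (Ω' : Set (EuclideanSpace ℝ (Fin n)))
    (hne : ∀ j, (Ω j).Nonempty) (hcl : ∀ j, IsClosed (Ω j))
    (hne' : Ω'.Nonempty) (hcl' : IsClosed Ω')
    (xb : EuclideanSpace ℝ (Fin n)) (hxbΩ : ∀ j, xb ∈ Ω j) (hxbΩ' : xb ∈ Ω')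
    (δ : ℝ) (hδ : 0 < δ) (κ : Fin m → ℝ) (hκ : ∀ j, 0 < κ j)
    (hreg : ∀ j, ∀ x ∈ Metric.closedBall xb δ,
      Metric.infDist x (Ω j ∩ Ω') ≤
        κ j * max (Metric.infDist x (Ω j)) (Metric.infDist x Ω')) :
    ∀ x ∈ Metric.closedBall xb δ,
      Metric.infDist x ((⋃ j, Ω j) ∩ Ω') ≤
        (Finset.univ.sup' ⟨⟨0, hm⟩, Finset.mem_univ _⟩ κ) *
          max (Metric.infDist x (⋃ j, Ω j)) (Metric.infDist x Ω') := by
  intro x hx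
  obtain ⟨j₀, -, hj₀⟩ := Finset.exists_min_image Finset.univ
    (fun j => Metric.infDist x (Ω j)) ⟨⟨0, hm⟩, Finset.mem_univ _⟩
  have hUne : (⋃ j, Ω j).Nonempty := ⟨xb, Set.mem_iUnion.2 ⟨j₀, hxbΩ j₀⟩⟩
  have heq : Metric.infDist x (⋃ j, Ω j) = Metric.infDist x (Ω j₀) := by
    apply le_antisymm
    · exact Metric.infDist_le_infDist_of_subset (Set.subset_iUnion Ω j₀) (hne j₀)
    · by_contra h
      push_neg at h
      obtain ⟨y, hy, hlt⟩ := (Metric.infDist_lt_iff hUne).1 h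
      obtain ⟨j, hj⟩ := Set.mem_iUnion.1 hy
      exact absurd (le_trans (hj₀ j (Finset.mem_univ j))
        (Metric.infDist_le_dist_of_mem hj)) (not_le.2 hlt)
  calc Metric.infDist x ((⋃ j, Ω j) ∩ Ω')
      ≤ Metric.infDist x (Ω j₀ ∩ Ω') := by
        apply Metric.infDist_le_infDist_of_subset
        · exact Set.inter_subset_inter_left _ (Set.subset_iUnion Ω j₀)
        · exact ⟨xb, hxbΩ j₀, hxbΩ'⟩
    _ ≤ κ j₀ * max (Metric.infDist x (Ω j₀)) (Metric.infDist x Ω') := hreg j₀ x hx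
    _ = κ j₀ * max (Metric.infDist x (⋃ j, Ω j)) (Metric.infDist x Ω') := by rw [heq]
    _ ≤ (Finset.univ.sup' ⟨⟨0, hm⟩, Finset.mem_univ _⟩ κ) *
          max (Metric.infDist x (⋃ j, Ω j)) (Metric.infDist x Ω') := by
        apply mul_le_mul_of_nonneg_right
        · exact Finset.le_sup' κ (Finset.mem_univ j₀)
        · exact le_max_of_le_right Metric.infDist_nonneg
end

section
/- Let M ∈ ℝ^{m×n} be full rank with m < n, p ∈ ℝ^m, B = {x ∈ ℝ^n : Mx = p}, and suppose A_s ∩ B is nonempty. Let x̄ ∈ A_s ∩ B with x̄ ≠ 0 and let 0 < δ < min{|x̄_j| : x̄_j ≠ 0}. Then the pair (A_s, B) is locally linearly regular on the closed ball B_{δ/2}(x̄): there exists κ > 0 such that dist(x, A_s ∩ B) ≤ κ · max(dist(x, A_s), dist(x, B)) for all x with ‖x − x̄‖ ≤ δ/2. -/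
/-- The affine constraint set `B = {x | Mx = p}`. -/
def Bset {m n : ℕ} (M : Matrix (Fin m) (Fin n) ℝ) (p : Fin m → ℝ) :
    Set (EuclideanSpace ℝ (Fin n)) := {x | M.mulVec x = p}

section StmtAux

lemma le_infDist' {X : Type*} [MetricSpace X] {s : Set X} (hs : s.Nonempty) {x : X} {c : ℝ}
    (h : ∀ y ∈ s, c ≤ dist x y) : c ≤ Metric.infDist x s := by
  by_contra hc
  push_neg at hc
  obtain ⟨y, hy, hd⟩ := (Metric.infDist_lt_iff hs).1 hc
  exact absurd (h y hy) (not_le.2 hd)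

variable {E' : Type*} [NormedAddCommGroup E'] [NormedSpace ℝ E']

lemma infDist_add_le' (U : Submodule ℝ E') {a : E'} (ha : a ∈ U) (x : E') :
    Metric.infDist (x + a) (U : Set E') ≤ Metric.infDist x (U : Set E') := by
  refine le_infDist' ⟨0, U.zero_mem⟩ (fun y hy => ?_)
  have h := Metric.infDist_le_dist_of_mem (x := x + a) (U.add_mem hy ha)
  simpa [dist_add_right] using h

lemma infDist_add_mem' (U : Submodule ℝ E') {a : E'} (ha : a ∈ U) (x : E') :
    Metric.infDist (x + a) (U : Set E') = Metric.infDist x (U : Set E') := by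
  refine le_antisymm (infDist_add_le' U ha x) ?_
  have h := infDist_add_le' U (U.neg_mem ha) (x + a)
  simpa using h

lemma infDist_smul_le' (U : Submodule ℝ E') {t : ℝ} (ht : 0 < t) (x : E') :
    Metric.infDist (t • x) (U : Set E') ≤ t * Metric.infDist x (U : Set E') := by
  have key : t⁻¹ * Metric.infDist (t • x) (U : Set E') ≤ Metric.infDist x (U : Set E') := by
    refine le_infDist' ⟨0, U.zero_mem⟩ (fun y hy => ?_)
    have h := Metric.infDist_le_dist_of_mem (x := t • x) (U.smul_mem t hy)
    have h2 : dist (t • x) (t • y) = t * dist x y := by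
      rw [dist_smul₀, Real.norm_of_nonneg ht.le]
    rw [h2] at h
    rw [inv_mul_le_iff₀ ht]
    linarith [h]
  calc Metric.infDist (t • x) (U : Set E')
      = t * (t⁻¹ * Metric.infDist (t • x) (U : Set E')) := by field_simp
    _ ≤ t * Metric.infDist x (U : Set E') := mul_le_mul_of_nonneg_left key ht.le

lemma infDist_smul_eq' (U : Submodule ℝ E') {t : ℝ} (ht : 0 < t) (x : E') :
    Metric.infDist (t • x) (U : Set E') = t * Metric.infDist x (U : Set E') := by
  refine le_antisymm (infDist_smul_le' U ht x) ?_
  have h := infDist_smul_le' U (inv_pos.2 ht) (t • x)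
  rw [inv_smul_smul₀ ht.ne'] at h
  calc t * Metric.infDist x (U : Set E')
      ≤ t * (t⁻¹ * Metric.infDist (t • x) (U : Set E')) := mul_le_mul_of_nonneg_left h ht.le
    _ = Metric.infDist (t • x) (U : Set E') := by field_simp

lemma subspace_reg {n : ℕ} (U W : Submodule ℝ (EuclideanSpace ℝ (Fin n))) :
    ∃ κ > (0:ℝ), ∀ x : EuclideanSpace ℝ (Fin n),
      Metric.infDist x
        ((U ⊓ W : Submodule ℝ (EuclideanSpace ℝ (Fin n))) : Set (EuclideanSpace ℝ (Fin n))) ≤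
      κ * (Metric.infDist x (U : Set (EuclideanSpace ℝ (Fin n))) +
           Metric.infDist x (W : Set (EuclideanSpace ℝ (Fin n)))) := by
  classical
  set E := EuclideanSpace ℝ (Fin n)
  set K : Submodule ℝ E := U ⊓ W with hK
  set f : E → ℝ := fun x => Metric.infDist x (U : Set E) + Metric.infDist x (W : Set E) with hf
  have hfc : Continuous f := (Metric.continuous_infDist_pt _).add (Metric.continuous_infDist_pt _)
  have hf0 : ∀ x, 0 ≤ f x := fun x => add_nonneg Metric.infDist_nonneg Metric.infDist_nonneg
  have hfK : ∀ x, f x = 0 → x ∈ K := by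
    intro x hx
    have hfx : Metric.infDist x (U : Set E) + Metric.infDist x (W : Set E) = 0 := hx
    have h1 : Metric.infDist x (U : Set E) = 0 :=
      le_antisymm (by have := Metric.infDist_nonneg (x := x) (s := (W : Set E)); linarith)
        Metric.infDist_nonneg
    have h2 : Metric.infDist x (W : Set E) = 0 :=
      le_antisymm (by have := Metric.infDist_nonneg (x := x) (s := (U : Set E)); linarith)
        Metric.infDist_nonneg
    have hxU : x ∈ U :=
      (U.closed_of_finiteDimensional.mem_iff_infDist_zero ⟨0, U.zero_mem⟩).2 h1
    have hxW : x ∈ W :=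
      (W.closed_of_finiteDimensional.mem_iff_infDist_zero ⟨0, W.zero_mem⟩).2 h2
    exact Submodule.mem_inf.2 ⟨hxU, hxW⟩
  have hfmem : ∀ (a : E), a ∈ K → ∀ b, f (b + a) = f b := by
    intro a ha b
    have haU : a ∈ U := (Submodule.mem_inf.1 ha).1
    have haW : a ∈ W := (Submodule.mem_inf.1 ha).2
    simp only [hf]
    rw [infDist_add_mem' U haU, infDist_add_mem' W haW]
  set C : Set E := Metric.sphere (0:E) 1 ∩ (Kᗮ : Set E) with hC
  have hCcomp : IsCompact C :=
    (isCompact_sphere 0 1).inter_right (Kᗮ).closed_of_finiteDimensional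
  rcases C.eq_empty_or_nonempty with hCe | hCe
  · refine ⟨1, one_pos, fun x => ?_⟩
    have hKtop : K = ⊤ := by
      rw [← Submodule.orthogonal_eq_bot_iff]
      by_contra h
      obtain ⟨v, hv, hv0⟩ := Submodule.exists_mem_ne_zero_of_ne_bot h
      have hmem : (‖v‖⁻¹ • v) ∈ C := by
        constructor
        · simp [norm_smul, norm_ne_zero_iff.2 hv0]
        · exact (Kᗮ).smul_mem _ hv
      rw [hCe] at hmem
      exact hmem
    have hzero : Metric.infDist x (K : Set E) = 0 := by
      rw [hKtop]
      exact Metric.infDist_zero_of_mem (by trivial)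
    rw [hzero, one_mul]
    exact hf0 x
  · obtain ⟨x₀, hx₀C, hmin⟩ := hCcomp.exists_isMinOn hCe hfc.continuousOn
    have hx₀s : ‖x₀‖ = 1 := by simpa using hx₀C.1
    have hc : 0 < f x₀ := by
      rcases lt_or_eq_of_le (hf0 x₀) with h | h
      · exact h
      · exfalso
        have hxK : x₀ ∈ K := hfK x₀ h.symm
        have hxKp : x₀ ∈ Kᗮ := hx₀C.2
        have hx0 : x₀ = 0 := by
          have h0 : (inner ℝ x₀ x₀ : ℝ) = 0 := (Submodule.mem_orthogonal K x₀).1 hxKp x₀ hxK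
          exact inner_self_eq_zero.1 h0
        rw [hx0] at hx₀s; simp at hx₀s
    refine ⟨(f x₀)⁻¹, inv_pos.2 hc, fun x => ?_⟩
    obtain ⟨a, ha, b, hb, hab⟩ := K.exists_add_mem_mem_orthogonal x
    have hdist : Metric.infDist x (K : Set E) ≤ ‖b‖ := by
      have h := Metric.infDist_le_dist_of_mem (x := x) ha
      calc Metric.infDist x (K : Set E) ≤ dist x a := h
        _ = ‖b‖ := by rw [hab]; simp [dist_eq_norm]
    have hfb : f x = f b := by
      rw [hab, add_comm a b]
      exact hfmem a ha b
    rcases eq_or_ne b 0 with hb0 | hb0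
    · have h1 : Metric.infDist x (K : Set E) ≤ 0 := by rw [hb0] at hdist; simpa using hdist
      have hge : 0 ≤ (f x₀)⁻¹ * f x := mul_nonneg (inv_pos.2 hc).le (hf0 x)
      linarith
    · have hbn : 0 < ‖b‖ := norm_pos_iff.2 hb0
      have huC : (‖b‖⁻¹ • b) ∈ C := by
        constructor
        · simp [norm_smul, hbn.ne']
        · exact (Kᗮ).smul_mem _ hb
      have hmin' : f x₀ ≤ f (‖b‖⁻¹ • b) := hmin huC
      have hfu : f (‖b‖⁻¹ • b) = ‖b‖⁻¹ * f b := by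
        simp only [hf]
        rw [infDist_smul_eq' U (inv_pos.2 hbn), infDist_smul_eq' W (inv_pos.2 hbn)]
        ring
      have hble : ‖b‖ ≤ (f x₀)⁻¹ * f b := by
        rw [hfu] at hmin'
        rw [le_inv_mul_iff₀ hbn] at hmin'
        rw [le_inv_mul_iff₀ hc]
        nlinarith [hf0 b]
      calc Metric.infDist x (K : Set E) ≤ ‖b‖ := hdist
        _ ≤ (f x₀)⁻¹ * f b := hble
        _ = (f x₀)⁻¹ * f x := by rw [hfb]

lemma exists_topk {n : ℕ} (g : Fin n → ℝ) :
    ∀ k, k ≤ n → ∃ T : Finset (Fin n), T.card = k ∧ ∀ i ∈ T, ∀ j, j ∉ T → g j ≤ g i := by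
  intro k
  induction k with
  | zero => exact fun _ => ⟨∅, rfl, by simp⟩
  | succ k ih =>
    intro hk
    obtain ⟨T, hcard, htop⟩ := ih (Nat.le_of_succ_le hk)
    have hTc : (Finset.univ \ T).Nonempty := by
      rw [← Finset.card_pos, Finset.card_sdiff_of_subset (Finset.subset_univ T)]
      simp only [Finset.card_univ, Fintype.card_fin]
      omega
    obtain ⟨i₀, hi₀, hmax⟩ := Finset.exists_max_image (Finset.univ \ T) g hTc
    have hi₀T : i₀ ∉ T := (Finset.mem_sdiff.1 hi₀).2
    refine ⟨insert i₀ T, ?_, ?_⟩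
    · rw [Finset.card_insert_of_notMem hi₀T, hcard]
    · intro i hi j hj
      rcases Finset.mem_insert.1 hi with rfl | hiT
      · exact hmax j (Finset.mem_sdiff.2 ⟨Finset.mem_univ _,
          fun h => hj (Finset.mem_insert_of_mem h)⟩)
      · exact htop i hiT j (fun h => hj (Finset.mem_insert_of_mem h))

lemma sum_compl_le {n : ℕ} (g : Fin n → ℝ) (hg : ∀ j, 0 ≤ g j) (T T' : Finset (Fin n))
    (hcard : T'.card ≤ T.card) (htop : ∀ i ∈ T, ∀ j, j ∉ T → g j ≤ g i) :
    ∑ j ∈ Finset.univ \ T, g j ≤ ∑ j ∈ Finset.univ \ T', g j := by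
  rw [Finset.sum_sdiff_eq_sub (Finset.subset_univ T),
      Finset.sum_sdiff_eq_sub (Finset.subset_univ T')]
  have key : ∑ j ∈ T', g j ≤ ∑ j ∈ T, g j := by
    have h1 : ∑ j ∈ T' ∩ T, g j + ∑ j ∈ T' \ T, g j = ∑ j ∈ T', g j :=
      Finset.sum_inter_add_sum_sdiff T' T g
    have h2 : ∑ j ∈ T ∩ T', g j + ∑ j ∈ T \ T', g j = ∑ j ∈ T, g j :=
      Finset.sum_inter_add_sum_sdiff T T' g
    have hinter : ∑ j ∈ T' ∩ T, g j = ∑ j ∈ T ∩ T', g j := by rw [Finset.inter_comm]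
    have hmain : ∑ j ∈ T' \ T, g j ≤ ∑ j ∈ T \ T', g j := by
      rcases Finset.eq_empty_or_nonempty (T' \ T) with he | hne
      · rw [he]; simp
        exact Finset.sum_nonneg (fun j _ => hg j)
      · have hcs : (T' \ T).card ≤ (T \ T').card := by
          have e1 := Finset.card_sdiff_add_card_inter T' T
          have e2 := Finset.card_sdiff_add_card_inter T T'
          rw [Finset.inter_comm] at e1
          omega
        have hTT' : (T \ T').Nonempty := by
          rw [← Finset.card_pos]
          have := Finset.card_pos.2 hne
          omega
        obtain ⟨i₀, hi₀, hminp⟩ := Finset.exists_min_image (T \ T') g hTT'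
        have hi₀T : i₀ ∈ T := (Finset.mem_sdiff.1 hi₀).1
        have step1 : ∑ j ∈ T' \ T, g j ≤ (T' \ T).card • g i₀ :=
          Finset.sum_le_card_nsmul _ _ _ (fun j hj => htop i₀ hi₀T j (Finset.mem_sdiff.1 hj).2)
        have step2 : ((T' \ T).card : ℝ) • g i₀ ≤ ((T \ T').card : ℝ) • g i₀ := by
          have := hg i₀
          simp only [smul_eq_mul]
          apply mul_le_mul_of_nonneg_right _ this
          exact_mod_cast hcs
        have step3 : (T \ T').card • g i₀ ≤ ∑ j ∈ T \ T', g j :=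
          Finset.card_nsmul_le_sum _ _ _ (fun j hj => hminp j hj)
        calc ∑ j ∈ T' \ T, g j ≤ (T' \ T).card • g i₀ := step1
          _ = ((T' \ T).card : ℝ) • g i₀ := by simp [nsmul_eq_mul]
          _ ≤ ((T \ T').card : ℝ) • g i₀ := step2
          _ = (T \ T').card • g i₀ := by simp [nsmul_eq_mul]
          _ ≤ ∑ j ∈ T \ T', g j := step3
    linarith
  linarith

lemma abs_coord_le_norm {n : ℕ} (v : EuclideanSpace ℝ (Fin n)) (j : Fin n) : |v j| ≤ ‖v‖ := by
  rw [EuclideanSpace.norm_eq]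
  rw [← Real.sqrt_sq_eq_abs]
  apply Real.sqrt_le_sqrt
  have h : v j ^ 2 = ‖v j‖ ^ 2 := by simp [Real.norm_eq_abs, sq_abs]
  rw [h]
  exact Finset.single_le_sum (f := fun i => ‖v i‖ ^ 2) (fun i _ => sq_nonneg _) (Finset.mem_univ j)

def kerSub {m n : ℕ} (M : Matrix (Fin m) (Fin n) ℝ) : Submodule ℝ (EuclideanSpace ℝ (Fin n)) where
  carrier := {x | M.mulVec x = 0}
  add_mem' := by
    intro a b ha hb
    simp only [Set.mem_setOf_eq] at *
    have h : M.mulVec (a + b) = M.mulVec a + M.mulVec b := by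
      ext i
      simp [Matrix.mulVec, dotProduct, mul_add, Finset.sum_add_distrib]
    rw [WithLp.ofLp_add, h, ha, hb, add_zero]
  zero_mem' := by
    simp only [Set.mem_setOf_eq]
    ext i
    simp [Matrix.mulVec, dotProduct]
  smul_mem' := by
    intro c x hx
    simp only [Set.mem_setOf_eq] at *
    have h : M.mulVec (c • x) = c • M.mulVec x := by
      ext i
      simp only [Matrix.mulVec, dotProduct, PiLp.smul_apply, Pi.smul_apply,
        smul_eq_mul, Finset.mul_sum]
      apply Finset.sum_congr rfl
      intro k _
      ring
    rw [WithLp.ofLp_smul, h, hx, smul_zero]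

lemma mem_kerSub {m n : ℕ} (M : Matrix (Fin m) (Fin n) ℝ) (x : EuclideanSpace ℝ (Fin n)) :
    x ∈ kerSub M ↔ M.mulVec x = 0 := Iff.rfl

def VT {n : ℕ} (T : Finset (Fin n)) : Submodule ℝ (EuclideanSpace ℝ (Fin n)) where
  carrier := {x | ∀ j, j ∉ T → x j = 0}
  add_mem' := by
    intro a b ha hb j hj
    simp only [PiLp.add_apply, ha j hj, hb j hj, add_zero]
  zero_mem' := by intro j hj; rfl
  smul_mem' := by
    intro c x hx j hj
    simp only [PiLp.smul_apply, hx j hj, smul_zero]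

lemma mem_VT {n : ℕ} (T : Finset (Fin n)) (x : EuclideanSpace ℝ (Fin n)) :
    x ∈ VT T ↔ ∀ j, j ∉ T → x j = 0 := Iff.rfl

lemma mulVec_add' {m n : ℕ} (M : Matrix (Fin m) (Fin n) ℝ) (a b : EuclideanSpace ℝ (Fin n)) :
    M.mulVec (a + b) = M.mulVec a + M.mulVec b := by
  ext i
  simp [Matrix.mulVec, dotProduct, mul_add, Finset.sum_add_distrib]

lemma mulVec_sub' {m n : ℕ} (M : Matrix (Fin m) (Fin n) ℝ) (a b : EuclideanSpace ℝ (Fin n)) :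
    M.mulVec (a - b) = M.mulVec a - M.mulVec b := by
  ext i
  simp [Matrix.mulVec, dotProduct, mul_sub, Finset.sum_sub_distrib]

lemma infDist_translate {n : ℕ} (s : Set (EuclideanSpace ℝ (Fin n)))
    (v x : EuclideanSpace ℝ (Fin n)) :
    Metric.infDist x ((fun z => z + v) '' s) = Metric.infDist (x - v) s := by
  have hiso : Isometry (fun z : EuclideanSpace ℝ (Fin n) => z + v) :=
    Isometry.of_dist_eq (fun a b => by simp [dist_add_right])
  have h := Metric.infDist_image (x := x - v) (t := s) hiso
  simpa using h

lemma image_kerSub {m n : ℕ} (M : Matrix (Fin m) (Fin n) ℝ) (p : Fin m → ℝ)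
    (xb : EuclideanSpace ℝ (Fin n)) (hxb : M.mulVec xb = p) :
    (fun z => z + xb) '' ((kerSub M : Submodule ℝ (EuclideanSpace ℝ (Fin n))) : Set _)
      = Bset M p := by
  ext z
  constructor
  · rintro ⟨w, hw, rfl⟩
    rw [SetLike.mem_coe, mem_kerSub] at hw
    show M.mulVec (w + xb) = p
    rw [mulVec_add', hw, hxb, zero_add]
  · intro hz
    refine ⟨z - xb, ?_, by simp⟩
    rw [SetLike.mem_coe, mem_kerSub, WithLp.ofLp_sub, mulVec_sub', hz, hxb, sub_self]

lemma image_kerVT {m n : ℕ} (M : Matrix (Fin m) (Fin n) ℝ) (p : Fin m → ℝ)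
    (T : Finset (Fin n)) (xb : EuclideanSpace ℝ (Fin n)) (hxb : M.mulVec xb = p)
    (hxbV : xb ∈ VT T) :
    (fun z => z + xb) '' ((kerSub M ⊓ VT T : Submodule ℝ (EuclideanSpace ℝ (Fin n))) : Set _)
      = (VT T : Set (EuclideanSpace ℝ (Fin n))) ∩ Bset M p := by
  ext z
  constructor
  · rintro ⟨w, hw, rfl⟩
    obtain ⟨hw1, hw2⟩ := Submodule.mem_inf.1 hw
    constructor
    · exact (VT T).add_mem hw2 hxbV
    · rw [mem_kerSub] at hw1
      show M.mulVec (w + xb) = p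
      rw [mulVec_add', hw1, hxb, zero_add]
  · rintro ⟨hzV, hzB⟩
    refine ⟨z - xb, Submodule.mem_inf.2 ⟨?_, ?_⟩, by simp⟩
    · rw [mem_kerSub, WithLp.ofLp_sub, mulVec_sub', hzB, hxb, sub_self]
    · exact (VT T).sub_mem hzV hxbV

lemma norm_eq_sqrt_sum {n : ℕ} (v : EuclideanSpace ℝ (Fin n)) :
    ‖v‖ = Real.sqrt (∑ j, (v j)^2) := by
  rw [EuclideanSpace.norm_eq]
  congr 1
  apply Finset.sum_congr rfl
  intro j _
  simp [Real.norm_eq_abs, sq_abs]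

end StmtAux

/-- Local linear regularity of the pair `(A_s, B)` on `B_{δ/2}(x̄)` at a point
`x̄ ∈ A_s ∩ B`, `x̄ ≠ 0`, for `0 < δ < min{|x̄_j| : x̄_j ≠ 0}`. -/
theorem stmt7 {n m s : ℕ} (hmn : m < n) (M : Matrix (Fin m) (Fin n) ℝ)
    (hrank : M.rank = m) (p : Fin m → ℝ)
    (hne : (Asp n s ∩ Bset M p).Nonempty)
    (xb : EuclideanSpace ℝ (Fin n)) (hxb : xb ∈ Asp n s ∩ Bset M p) (hne0 : xb ≠ 0)
    (δ : ℝ) (hδ : 0 < δ) (hsmall : ∀ j, xb j ≠ 0 → δ < |xb j|) :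
    ∃ κ > (0:ℝ), ∀ x : EuclideanSpace ℝ (Fin n), ‖x - xb‖ ≤ δ / 2 →
      Metric.infDist x (Asp n s ∩ Bset M p) ≤
        κ * max (Metric.infDist x (Asp n s)) (Metric.infDist x (Bset M p)) := by
  classical
  obtain ⟨hxbA, hxbB⟩ := hxb
  have hreg : ∀ T : Finset (Fin n), ∃ κ > (0:ℝ), ∀ x : EuclideanSpace ℝ (Fin n),
      Metric.infDist x ((kerSub M ⊓ VT T : Submodule ℝ (EuclideanSpace ℝ (Fin n))) : Set _) ≤
      κ * (Metric.infDist x ((kerSub M : Submodule ℝ (EuclideanSpace ℝ (Fin n))) : Set _) +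
           Metric.infDist x ((VT T : Submodule ℝ (EuclideanSpace ℝ (Fin n))) : Set _)) :=
    fun T => subspace_reg _ _
  choose κf hκf hκspec using hreg
  have hFne : (Finset.univ : Finset (Finset (Fin n))).Nonempty := ⟨∅, Finset.mem_univ _⟩
  set κ₀ : ℝ := Finset.univ.sup' hFne κf with hκ₀
  have hκ₀pos : 0 < κ₀ := lt_of_lt_of_le (hκf ∅) (Finset.le_sup' κf (Finset.mem_univ ∅))
  refine ⟨2 * κ₀, by linarith, fun x hx => ?_⟩
  -- support of xb
  set S : Finset (Fin n) := Finset.univ.filter (fun j => xb j ≠ 0) with hS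
  have hScard : S.card ≤ s := hxbA
  have hScn : S.card ≤ n := by
    calc S.card ≤ (Finset.univ : Finset (Fin n)).card := Finset.card_le_card (Finset.subset_univ S)
      _ = n := by simp
  set s' : ℕ := min s n with hs'
  have hSs' : S.card ≤ s' := le_min hScard hScn
  obtain ⟨T, hTcard, hTtop⟩ := exists_topk (fun j => |x j|) s' (min_le_right s n)
  -- coordinate estimates
  have hxcoord : ∀ j, |x j - xb j| ≤ δ / 2 := by
    intro j
    have h1 := abs_coord_le_norm (x - xb) j
    have h2 : (x - xb) j = x j - xb j := rfl
    rw [h2] at h1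
    linarith
  have hbig : ∀ j ∈ S, δ / 2 < |x j| := by
    intro j hj
    have hj0 : xb j ≠ 0 := (Finset.mem_filter.1 hj).2
    have h1 := hsmall j hj0
    have h2 := hxcoord j
    have h3 : |xb j| - |x j| ≤ |x j - xb j| := by
      rw [abs_sub_comm]
      exact abs_sub_abs_le_abs_sub _ _
    linarith
  have hsmallc : ∀ j, j ∉ S → |x j| ≤ δ / 2 := by
    intro j hj
    have hj0 : xb j = 0 := by
      by_contra h
      exact hj (Finset.mem_filter.2 ⟨Finset.mem_univ _, h⟩)
    have := hxcoord j
    rw [hj0, sub_zero] at this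
    exact this
  -- S ⊆ T
  have hST : S ⊆ T := by
    intro j hjS
    by_contra hjT
    have hint : (T ∩ S).card < S.card := by
      apply Finset.card_lt_card
      constructor
      · exact Finset.inter_subset_right
      · intro hsub
        exact hjT (Finset.mem_inter.1 (hsub hjS)).1
    have hTS : (T \ S).Nonempty := by
      rw [← Finset.card_pos]
      have := Finset.card_sdiff_add_card_inter T S
      omega
    obtain ⟨i, hi⟩ := hTS
    have hiT : i ∈ T := (Finset.mem_sdiff.1 hi).1
    have hiS : i ∉ S := (Finset.mem_sdiff.1 hi).2
    have h1 := hTtop i hiT j hjT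
    have h2 := hsmallc i hiS
    have h3 := hbig j hjS
    simp only at h1
    linarith
  -- xb ∈ VT T
  have hxbVT : xb ∈ VT T := by
    rw [mem_VT]
    intro j hj
    by_contra h
    exact hj (hST (Finset.mem_filter.2 ⟨Finset.mem_univ _, h⟩))
  -- subset and nonemptiness
  have hsubset : ((VT T : Submodule ℝ (EuclideanSpace ℝ (Fin n))) : Set _) ∩ Bset M p
      ⊆ Asp n s ∩ Bset M p := by
    rintro z ⟨hzV, hzB⟩
    refine ⟨?_, hzB⟩
    show sparsity z ≤ s
    have hsub : Finset.univ.filter (fun i => z i ≠ 0) ⊆ T := by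
      intro j hj
      by_contra hjT
      exact (Finset.mem_filter.1 hj).2 ((mem_VT T z).1 hzV j hjT)
    calc sparsity z ≤ T.card := Finset.card_le_card hsub
      _ = s' := hTcard
      _ ≤ s := min_le_left s n
  have hVBne : (((VT T : Submodule ℝ (EuclideanSpace ℝ (Fin n))) : Set _) ∩ Bset M p).Nonempty :=
    ⟨xb, hxbVT, hxbB⟩
  -- step 1: pass to the smaller set
  have step1 : Metric.infDist x (Asp n s ∩ Bset M p) ≤
      Metric.infDist x (((VT T : Submodule ℝ (EuclideanSpace ℝ (Fin n))) : Set _) ∩ Bset M p) :=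
    Metric.infDist_le_infDist_of_subset hsubset hVBne
  -- translate
  have himage := image_kerVT M p T xb hxbB hxbVT
  have hBimage := image_kerSub M p xb hxbB
  have step2 : Metric.infDist x
      (((VT T : Submodule ℝ (EuclideanSpace ℝ (Fin n))) : Set _) ∩ Bset M p)
      = Metric.infDist (x - xb)
        ((kerSub M ⊓ VT T : Submodule ℝ (EuclideanSpace ℝ (Fin n))) : Set _) := by
    rw [← himage, infDist_translate]
  have step3 := hκspec T (x - xb)
  have step4 : Metric.infDist (x - xb)
      ((kerSub M : Submodule ℝ (EuclideanSpace ℝ (Fin n))) : Set _)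
      = Metric.infDist x (Bset M p) := by
    rw [← hBimage, infDist_translate]
  -- step 5: infDist (x - xb) (VT T) ≤ infDist x (Asp n s)
  have hzero_nonT : ∀ j, j ∉ T → xb j = 0 := (mem_VT T xb).1 hxbVT
  have step5 : Metric.infDist (x - xb)
      ((VT T : Submodule ℝ (EuclideanSpace ℝ (Fin n))) : Set _)
      ≤ Metric.infDist x (Asp n s) := by
    have hAne : (Asp n s).Nonempty := ⟨0, by simp [Asp, sparsity]⟩
    -- the truncation of x - xb to T
    set w : EuclideanSpace ℝ (Fin n) := WithLp.toLp 2 (fun j => if j ∈ T then x j - xb j else 0) with hw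
    have hwVT : w ∈ VT T := by
      rw [mem_VT]
      intro j hj
      simp [hw, hj]
    have hdxw : dist (x - xb) w = Real.sqrt (∑ j ∈ Finset.univ \ T, (x j)^2) := by
      rw [dist_eq_norm, norm_eq_sqrt_sum]
      congr 1
      rw [Finset.sum_sdiff_eq_sub (Finset.subset_univ T)]
      have : ∀ j, ((x - xb - w) j)^2 = if j ∈ T then 0 else (x j)^2 := by
        intro j
        have hj : (x - xb - w) j = x j - xb j - w j := rfl
        by_cases hjT : j ∈ T
        · simp [hj, hw, hjT]
        · simp [hj, hw, hjT, hzero_nonT j hjT]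
      rw [Finset.sum_congr rfl (fun j _ => this j)]
      have h2 : (∑ j, if j ∈ T then (0:ℝ) else (x j)^2)
          = ∑ j, ((x j)^2 - if j ∈ T then (x j)^2 else 0) := by
        apply Finset.sum_congr rfl
        intro j _
        by_cases hjT : j ∈ T <;> simp [hjT]
      rw [h2, Finset.sum_sub_distrib, Finset.sum_ite_mem, Finset.univ_inter]
    have h5a : Metric.infDist (x - xb)
        ((VT T : Submodule ℝ (EuclideanSpace ℝ (Fin n))) : Set _)
        ≤ Real.sqrt (∑ j ∈ Finset.univ \ T, (x j)^2) := by
      rw [← hdxw]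
      exact Metric.infDist_le_dist_of_mem hwVT
    refine le_infDist' hAne (fun z hz => ?_)
    refine h5a.trans ?_
    set T' : Finset (Fin n) := Finset.univ.filter (fun j => z j ≠ 0) with hT'
    have hT'card : T'.card ≤ T.card := by
      rw [hTcard]
      refine le_min hz ?_
      calc T'.card ≤ (Finset.univ : Finset (Fin n)).card :=
            Finset.card_le_card (Finset.subset_univ T')
        _ = n := by simp
    have htop' : ∀ i ∈ T, ∀ j, j ∉ T → (x j)^2 ≤ (x i)^2 := by
      intro i hi j hj
      have h := hTtop i hi j hj
      simp only at h
      calc (x j)^2 = |x j|^2 := (sq_abs _).symm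
        _ ≤ |x i|^2 := by
            apply pow_le_pow_left₀ (abs_nonneg _) h
        _ = (x i)^2 := sq_abs _
    have hsum := sum_compl_le (fun j => (x j)^2) (fun j => sq_nonneg _) T T' hT'card htop'
    have hz0 : ∀ j, j ∉ T' → z j = 0 := by
      intro j hj
      by_contra h
      exact hj (Finset.mem_filter.2 ⟨Finset.mem_univ _, h⟩)
    have hdz : dist x z = Real.sqrt (∑ j, (x j - z j)^2) := by
      rw [dist_eq_norm, norm_eq_sqrt_sum]
      rfl
    rw [hdz]
    apply Real.sqrt_le_sqrt
    calc ∑ j ∈ Finset.univ \ T, (x j)^2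
        ≤ ∑ j ∈ Finset.univ \ T', (x j)^2 := hsum
      _ = ∑ j ∈ Finset.univ \ T', (x j - z j)^2 := by
          apply Finset.sum_congr rfl
          intro j hj
          rw [hz0 j (Finset.mem_sdiff.1 hj).2, sub_zero]
      _ ≤ ∑ j, (x j - z j)^2 :=
          Finset.sum_le_sum_of_subset_of_nonneg (Finset.sdiff_subset)
            (fun j _ _ => sq_nonneg _)
  -- final combination
  set a : ℝ := Metric.infDist x (Asp n s) with haa
  set b : ℝ := Metric.infDist x (Bset M p) with hbb
  have ha0 : 0 ≤ a := Metric.infDist_nonneg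
  have hb0 : 0 ≤ b := Metric.infDist_nonneg
  have hκT : κf T ≤ κ₀ := Finset.le_sup' κf (Finset.mem_univ T)
  have hmaxa : a ≤ max a b := le_max_left a b
  have hmaxb : b ≤ max a b := le_max_right a b
  calc Metric.infDist x (Asp n s ∩ Bset M p)
      ≤ Metric.infDist x (((VT T : Submodule ℝ (EuclideanSpace ℝ (Fin n))) : Set _) ∩ Bset M p) :=
        step1
    _ = Metric.infDist (x - xb)
        ((kerSub M ⊓ VT T : Submodule ℝ (EuclideanSpace ℝ (Fin n))) : Set _) := step2
    _ ≤ κf T * (Metric.infDist (x - xb)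
          ((kerSub M : Submodule ℝ (EuclideanSpace ℝ (Fin n))) : Set _) +
        Metric.infDist (x - xb)
          ((VT T : Submodule ℝ (EuclideanSpace ℝ (Fin n))) : Set _)) := step3
    _ ≤ κf T * (b + a) := by
        apply mul_le_mul_of_nonneg_left _ (hκf T).le
        rw [step4]
        exact add_le_add_right step5 b
    _ ≤ 2 * κ₀ * max a b := by nlinarith [hκf T]
end

section
/- Let M ∈ ℝ^{m×n} with m < n be full rank, p ∈ ℝ^m, B = {x ∈ ℝ^n : Mx = p}, and suppose there exists x̄ ∈ A_s ∩ B with exactly s nonzero entries (‖x̄‖₀ = s). If s < rank(M), then every open neighborhood of x̄ contains a point z with z ∈ R_{A_s}(R_B z) (equivalently, z is a fixed point of the Douglas–Rachford operator T_DR = ½(R_{A_s}R_B + Id)) such that z ∉ A_s ∩ B. -/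
/-- Coercion of a plain vector into Euclidean space. -/
def vecE {m : ℕ} (v : Fin m → ℝ) : EuclideanSpace ℝ (Fin m) := WithLp.toLp 2 v

/-- The Moore–Penrose inverse `M† = Mᵀ(MMᵀ)⁻¹` of a full-rank wide matrix. -/
noncomputable def Mdag {m n : ℕ} (M : Matrix (Fin m) (Fin n) ℝ) : Matrix (Fin n) (Fin m) ℝ :=
  M.transpose * (M * M.transpose)⁻¹

/-- The (single-valued) orthogonal projection onto `B`, `P_B x = x - M†(Mx - p)`. -/
noncomputable def projB {m n : ℕ} (M : Matrix (Fin m) (Fin n) ℝ) (p : Fin m → ℝ)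
    (x : EuclideanSpace ℝ (Fin n)) : EuclideanSpace ℝ (Fin n) :=
  x - vecE ((Mdag M).mulVec (M.mulVec x - p))

/-- The (single-valued) reflector across `B`, `R_B = 2P_B - Id`. -/
noncomputable def reflB {m n : ℕ} (M : Matrix (Fin m) (Fin n) ℝ) (p : Fin m → ℝ)
    (x : EuclideanSpace ℝ (Fin n)) : EuclideanSpace ℝ (Fin n) :=
  (2:ℝ) • projB M p x - x

open Matrix Finset


lemma isUnit_det_of_rank_eq {k : ℕ} (A : Matrix (Fin k) (Fin k) ℝ) (h : A.rank = k) :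
    IsUnit A.det := by
  rw [isUnit_iff_ne_zero]
  intro hdet
  obtain ⟨v, hv0, hv⟩ := (Matrix.exists_mulVec_eq_zero_iff).2 hdet
  have hker : v ∈ LinearMap.ker A.mulVecLin := hv
  have h1 : 0 < Module.finrank ℝ (LinearMap.ker A.mulVecLin) :=
    Module.finrank_pos_iff.2 ⟨⟨v, hker⟩, 0, by simpa using hv0⟩
  have h2 := LinearMap.finrank_range_add_finrank_ker A.mulVecLin
  rw [Module.finrank_fintype_fun_eq_card, Fintype.card_fin] at h2
  have h3 : A.rank = Module.finrank ℝ (LinearMap.range A.mulVecLin) := rfl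
  omega

lemma exists_ker_vec {m n s : ℕ} (M : Matrix (Fin m) (Fin n) ℝ) (S : Finset (Fin n))
    (hcard : S.card = s) (hs : s < m) :
    ∃ u : Fin m → ℝ, u ≠ 0 ∧ ∀ i ∈ S, Mᵀ.mulVec u i = 0 := by
  classical
  let L : (Fin m → ℝ) →ₗ[ℝ] ({i // i ∈ S} → ℝ) :=
    (LinearMap.funLeft ℝ ℝ (fun i : {i // i ∈ S} => (i : Fin n))).comp Mᵀ.mulVecLin
  have hrange : Module.finrank ℝ (LinearMap.range L) ≤ s := by
    have := Submodule.finrank_le (LinearMap.range L)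
    rwa [Module.finrank_fintype_fun_eq_card, Fintype.card_coe, hcard] at this
  have h2 := LinearMap.finrank_range_add_finrank_ker L
  rw [Module.finrank_fintype_fun_eq_card, Fintype.card_fin] at h2
  have hker : 0 < Module.finrank ℝ (LinearMap.ker L) := by omega
  have hne : LinearMap.ker L ≠ ⊥ := by
    intro hb
    rw [hb, finrank_bot] at hker
    omega
  obtain ⟨u, hu, hu0⟩ := Submodule.ne_bot_iff _ |>.1 hne
  refine ⟨u, hu0, fun i hi => ?_⟩
  have : L u = 0 := hu
  exact congrFun this ⟨i, hi⟩


lemma mem_projSet_of {n s : ℕ} (xb : EuclideanSpace ℝ (Fin n)) (d : Fin n → ℝ)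
    (hsp : sparsity xb = s) (c : ℝ) (hc0 : 0 ≤ c)
    (hc : ∀ i, xb i ≠ 0 → c ≤ |xb i|)
    (hd0 : ∀ i, xb i ≠ 0 → d i = 0)
    (hdc : ∀ i, |d i| ≤ c) :
    xb ∈ projSet (Asp n s) (xb - vecE d) := by
  constructor
  · exact le_of_eq hsp
  intro u hu
  rw [EuclideanSpace.norm_eq, EuclideanSpace.norm_eq]
  apply Real.sqrt_le_sqrt
  have happ : ∀ (v w : EuclideanSpace ℝ (Fin n)) (i : Fin n), (v - w) i = v i - w i :=
    fun _ _ _ => rfl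
  set S : Finset (Fin n) := Finset.univ.filter (fun i => xb i ≠ 0) with hSdef
  set W : Finset (Fin n) := Finset.univ.filter (fun i => u i ≠ 0) with hWdef
  have hmemS : ∀ i, i ∈ S ↔ xb i ≠ 0 := by intro i; simp [hSdef]
  have hmemW : ∀ i, i ∈ W ↔ u i ≠ 0 := by intro i; simp [hWdef]
  have hScard : S.card = s := by
    rw [← hsp, sparsity, hSdef]
  have hWcard : W.card ≤ s := by
    have h1 : sparsity u ≤ s := hu
    rw [sparsity] at h1
    rw [hWdef]
    exact h1
  -- LHS
  have hL1 : ∑ i, ‖(xb - vecE d - xb) i‖ ^ 2 = ∑ i, d i ^ 2 := by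
    apply Finset.sum_congr rfl
    intro i _
    rw [happ, happ]
    have h4 : xb i - vecE d i - xb i = -(d i) := by simp only [vecE, WithLp.ofLp_toLp]; ring
    rw [h4]
    simp [sq_abs]
  have hL2 : ∑ i, d i ^ 2 = ∑ i ∈ univ \ S, d i ^ 2 := by
    refine (Finset.sum_subset (Finset.subset_univ _) ?_).symm
    intro i _ hi
    have hiS : i ∈ S := by
      simp only [Finset.mem_sdiff, Finset.mem_univ, true_and, not_not] at hi
      exact hi
    rw [hd0 i ((hmemS i).1 hiS)]
    ring
  -- RHS
  have hR1 : ∑ i ∈ univ \ W, (xb i - d i) ^ 2 ≤ ∑ i, ‖(xb - vecE d - u) i‖ ^ 2 := by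
    have e1 : ∑ i ∈ univ \ W, (xb i - d i) ^ 2 = ∑ i ∈ univ \ W, ‖(xb - vecE d - u) i‖ ^ 2 := by
      apply Finset.sum_congr rfl
      intro i hi
      have hiW : i ∉ W := (Finset.mem_sdiff.1 hi).2
      have hui : u i = 0 := by
        by_contra h
        exact hiW ((hmemW i).2 h)
      rw [happ, happ]
      simp [vecE, hui, sq_abs]
    rw [e1]
    apply Finset.sum_le_sum_of_subset_of_nonneg (Finset.subset_univ _)
    intro i _ _
    positivity
  rw [hL1, hL2]
  refine le_trans ?_ hR1
  -- split both sums
  have split1 : ∑ i ∈ univ \ S, d i ^ 2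
      = ∑ i ∈ (univ \ S) \ W, d i ^ 2 + ∑ i ∈ (univ \ S) ∩ W, d i ^ 2 := by
    rw [← Finset.sum_sdiff (Finset.inter_subset_left (s₂ := W)), Finset.sdiff_inter_self_left]
  have split2 : ∑ i ∈ univ \ W, (xb i - d i) ^ 2
      = ∑ i ∈ (univ \ W) \ S, (xb i - d i) ^ 2 + ∑ i ∈ (univ \ W) ∩ S, (xb i - d i) ^ 2 := by
    rw [← Finset.sum_sdiff (Finset.inter_subset_left (s₂ := S)), Finset.sdiff_inter_self_left]
  rw [split1, split2]
  have hcomm : (univ \ S) \ W = (univ \ W) \ S := sdiff_right_comm univ S W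
  have e2 : ∑ i ∈ (univ \ W) \ S, (xb i - d i) ^ 2 = ∑ i ∈ (univ \ S) \ W, d i ^ 2 := by
    rw [hcomm]
    apply Finset.sum_congr rfl
    intro i hi
    have hiS : i ∉ S := (Finset.mem_sdiff.1 hi).2
    have : xb i = 0 := by
      by_contra h
      exact hiS ((hmemS i).2 h)
    rw [this]
    ring
  rw [e2]
  apply add_le_add_right
  -- core inequality
  have eWS : (univ \ S) ∩ W = W \ S := by
    ext i; simp [Finset.mem_sdiff, Finset.mem_inter, and_comm]
  have eSW : (univ \ W) ∩ S = S \ W := by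
    ext i; simp [Finset.mem_sdiff, Finset.mem_inter, and_comm]
  rw [eWS, eSW]
  have hcard : (W \ S).card ≤ (S \ W).card := by
    have h1 := Finset.card_inter_add_card_sdiff W S
    have h2 := Finset.card_inter_add_card_sdiff S W
    have h3 : (W ∩ S).card = (S ∩ W).card := by rw [Finset.inter_comm]
    omega
  calc ∑ i ∈ W \ S, d i ^ 2 ≤ (W \ S).card • (c ^ 2) := by
        apply Finset.sum_le_card_nsmul
        intro i _
        calc d i ^ 2 = |d i| ^ 2 := (sq_abs _).symm
        _ ≤ c ^ 2 := by
            apply pow_le_pow_left₀ (abs_nonneg _) (hdc i)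
  _ ≤ (S \ W).card • (c ^ 2) := by
        rw [nsmul_eq_mul, nsmul_eq_mul]
        apply mul_le_mul_of_nonneg_right _ (by positivity)
        exact_mod_cast hcard
  _ ≤ ∑ i ∈ S \ W, (xb i - d i) ^ 2 := by
        apply Finset.card_nsmul_le_sum
        intro i hi
        have hiS : i ∈ S := (Finset.mem_sdiff.1 hi).1
        have hxi := (hmemS i).1 hiS
        rw [hd0 i hxi, sub_zero]
        calc c ^ 2 ≤ |xb i| ^ 2 := pow_le_pow_left₀ hc0 (hc i hxi) 2
        _ = xb i ^ 2 := sq_abs _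

/-- If there is `x̄ ∈ A_s ∩ B` with exactly `s` nonzero entries and `s < rank M`, then every
neighborhood of `x̄` contains a fixed point `z` of the Douglas–Rachford operator
(`z ∈ R_{A_s}(R_B z)`, i.e. `z = 2w - R_B z` for a projection `w` of `R_B z` onto `A_s`)
which does not belong to `A_s ∩ B`. -/
theorem stmt12 {n m s : ℕ} (hmn : m < n) (M : Matrix (Fin m) (Fin n) ℝ)
    (hrank : M.rank = m) (p : Fin m → ℝ)
    (xb : EuclideanSpace ℝ (Fin n)) (hxb : xb ∈ Asp n s ∩ Bset M p)
    (hsp : sparsity xb = s) (hs : s < M.rank) :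
    ∀ U ∈ nhds xb, ∃ z ∈ U,
      (∃ w ∈ projSet (Asp n s) (reflB M p z), z = (2:ℝ) • w - reflB M p z) ∧
      z ∉ Asp n s ∩ Bset M p := by
  intro U hU
  obtain ⟨hxbA, hxbB⟩ := hxb
  have hxbB' : M.mulVec xb = p := hxbB
  rw [hrank] at hs
  set N : Matrix (Fin m) (Fin m) ℝ := M * Mᵀ with hN
  have hNrank : N.rank = m := by rw [hN, Matrix.rank_self_mul_transpose, hrank]
  have hNdet : IsUnit N.det := isUnit_det_of_rank_eq N hNrank
  set S : Finset (Fin n) := Finset.univ.filter (fun i => xb i ≠ 0) with hSdef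
  have hScard : S.card = s := hsp
  obtain ⟨u, hu0, huS⟩ := exists_ker_vec M S hScard hs
  set d : Fin n → ℝ := Mᵀ.mulVec u with hd
  have hMd : M.mulVec d = N.mulVec u := by rw [hd, Matrix.mulVec_mulVec, hN]
  have hNu : N.mulVec u ≠ 0 := by
    intro h
    apply hu0
    have h2 := congrArg (fun v => (N⁻¹).mulVec v) h
    simpa [Matrix.mulVec_mulVec, Matrix.nonsing_inv_mul N hNdet] using h2
  have hMdagN : Mdag M * N = Mᵀ := by
    rw [Mdag, hN, Matrix.mul_assoc, Matrix.nonsing_inv_mul _ hNdet, Matrix.mul_one]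
  set dE : EuclideanSpace ℝ (Fin n) := vecE d with hdE
  have hdE0 : dE ≠ 0 := by
    intro h
    apply hNu
    rw [← hMd]
    have : d = 0 := by
      have h' := congrArg WithLp.ofLp h
      simpa [hdE, vecE] using h'
    rw [this, Matrix.mulVec_zero]
  have hdEnorm : 0 < ‖dE‖ := norm_pos_iff.2 hdE0
  have hcoord : ∀ j, |d j| ≤ ‖dE‖ := by
    intro j
    rw [EuclideanSpace.norm_eq, ← Real.sqrt_sq_eq_abs]
    apply Real.sqrt_le_sqrt
    have : d j ^ 2 = ‖dE j‖ ^ 2 := by simp [hdE, vecE, sq_abs]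
    rw [this]
    exact Finset.single_le_sum (f := fun i => ‖dE i‖ ^ 2)
      (fun i _ => by positivity) (Finset.mem_univ j)
  -- lower bound on nonzero entries of xb
  obtain ⟨c, hc0, hc⟩ : ∃ c : ℝ, 0 < c ∧ ∀ i, xb i ≠ 0 → c ≤ |xb i| := by
    rcases S.eq_empty_or_nonempty with hSe | hSne
    · refine ⟨1, one_pos, fun i hi => absurd ?_ (Finset.notMem_empty i)⟩
      rw [← hSe]
      simp [hSdef, hi]
    · have hne : (S.image fun i => |xb i|).Nonempty := hSne.image _
      refine ⟨(S.image fun i => |xb i|).min' hne, ?_, ?_⟩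
      · obtain ⟨i, hiS, hie⟩ := Finset.mem_image.1 ((S.image fun i => |xb i|).min'_mem hne)
        rw [← hie]
        have : xb i ≠ 0 := by simpa [hSdef] using hiS
        positivity
      · intro i hi
        apply Finset.min'_le
        exact Finset.mem_image_of_mem _ (by simp [hSdef, hi])
  obtain ⟨ε, hε0, hball⟩ := Metric.mem_nhds_iff.1 hU
  set t : ℝ := min (c / ‖dE‖) (ε / (2 * ‖dE‖)) with htdef
  have ht0 : 0 < t := lt_min (div_pos hc0 hdEnorm) (div_pos hε0 (by linarith))
  have htc : t * ‖dE‖ ≤ c := by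
    have := min_le_left (c / ‖dE‖) (ε / (2 * ‖dE‖))
    calc t * ‖dE‖ ≤ (c / ‖dE‖) * ‖dE‖ := by nlinarith
    _ = c := div_mul_cancel₀ c (ne_of_gt hdEnorm)
  have htε : t * ‖dE‖ < ε := by
    have h7 := min_le_right (c / ‖dE‖) (ε / (2 * ‖dE‖))
    have h8 : (ε / (2 * ‖dE‖)) * ‖dE‖ = ε / 2 := by
      field_simp
    nlinarith
  set zf : Fin n → ℝ := fun i => xb i + t * d i with hzf
  set z : EuclideanSpace ℝ (Fin n) := vecE zf with hz
  have hzfPi : zf = (fun i => xb i) + t • d := rfl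
  have hMzf : M.mulVec zf = p + t • N.mulVec u := by
    rw [hzfPi, Matrix.mulVec_add, Matrix.mulVec_smul]
    rw [show M.mulVec (fun i => xb i) = p from hxbB', hMd]
  have hMz : M.mulVec z = p + t • N.mulVec u := hMzf
  have hproj : projB M p z = xb := by
    rw [projB]
    have h5 : M.mulVec z - p = t • N.mulVec u := by
      rw [hMz]; abel
    rw [h5]
    have h6 : (Mdag M).mulVec (t • N.mulVec u) = t • d := by
      rw [Matrix.mulVec_smul, Matrix.mulVec_mulVec, hMdagN, ← hd]
    rw [h6]
    ext i
    show zf i - (t • d) i = xb i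
    show xb i + t * d i - t * d i = xb i
    ring
  have hrefl : reflB M p z = xb - vecE (t • d) := by
    rw [reflB, hproj]
    ext i
    show (2 : ℝ) * xb i - zf i = xb i - (t • d) i
    show (2 : ℝ) * xb i - (xb i + t * d i) = xb i - t * d i
    ring
  have hd0' : ∀ i, xb i ≠ 0 → (t • d) i = 0 := by
    intro i hi
    have hiS : i ∈ S := by simp [hSdef, hi]
    show t * d i = 0
    rw [show d i = 0 from huS i hiS, mul_zero]
  have hdc' : ∀ i, |(t • d) i| ≤ c := by
    intro i
    show |t * d i| ≤ c
    rw [abs_mul, abs_of_pos ht0]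
    calc t * |d i| ≤ t * ‖dE‖ := by nlinarith [hcoord i]
    _ ≤ c := htc
  have hmem := mem_projSet_of xb (t • d) hsp c (le_of_lt hc0) hc hd0' hdc'
  refine ⟨z, ?_, ⟨xb, ?_, ?_⟩, ?_⟩
  · apply hball
    rw [Metric.mem_ball, dist_eq_norm]
    have h9 : z - xb = t • dE := by
      ext i
      show zf i - xb i = t * d i
      show xb i + t * d i - xb i = t * d i
      ring
    rw [h9, norm_smul, Real.norm_eq_abs, abs_of_pos ht0]
    exact htε
  · rw [hrefl]
    exact hmem
  · rw [hrefl]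
    ext i
    show zf i = (2 : ℝ) * xb i - (xb i - (t • d) i)
    show xb i + t * d i = (2 : ℝ) * xb i - (xb i - t * d i)
    ring
  · rintro ⟨-, hzB⟩
    have hzB' : M.mulVec z = p := hzB
    rw [hMz] at hzB'
    have h10 : t • N.mulVec u = 0 := by
      have := congrArg (fun q => q - p) hzB'
      simpa using this
    have h11 : N.mulVec u = 0 := by
      have := congrArg (fun v => t⁻¹ • v) h10
      simpa [smul_smul, inv_mul_cancel₀ (ne_of_gt ht0)] using this
    exact hNu h11
end

section
/- Let A and B be affine subspaces of ℝ^n with A ∩ B ≠ ∅, and let T_DR = ½(R_A R_B + Id) be the Douglas–Rachford operator, where R_A and R_B are the (single-valued) reflections across A and B. Then for every starting point x⁰ ∈ ℝ^n the iterates x^{k+1} = T_DR x^k converge to some fixed point x̄ of T_DR at a linear rate: there exist c ∈ [0,1) and C > 0 with ‖x^k − x̄‖ ≤ C c^k for all k. Moreover P_B x̄ ∈ A ∩ B. -/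
set_option linter.unusedSectionVars false
open RealInnerProductSpace
section aux
variable {E : Type*} [NormedAddCommGroup E] [InnerProductSpace ℝ E] [FiniteDimensional ℝ E]

lemma nearest_eq (A : AffineSubspace ℝ E) {z : E} (hz : z ∈ A) (p : E → E)
    (hp : ∀ x, p x ∈ A ∧ ∀ y ∈ A, ‖x - p x‖ ≤ ‖x - y‖) (x : E) :
    p x = z + (Submodule.orthogonalProjection A.direction (x - z) : E) := by
  set q : E := z + (Submodule.orthogonalProjection A.direction (x - z) : E) with hq
  have hqA : q ∈ A := by
    rw [hq, add_comm]
    exact AffineSubspace.vadd_mem_of_mem_direction (SetLike.coe_mem _) hz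
  have hqmin : ∀ y ∈ A, ‖x - q‖ ≤ ‖x - y‖ := by
    intro y hy
    have hd : y - z ∈ A.direction := AffineSubspace.vsub_mem_direction hy hz
    have horth : x - z - Submodule.orthogonalProjection A.direction (x - z) ∈ A.direction.orthogonal :=
      Submodule.sub_starProjection_mem_orthogonal (x - z)
    have hinner : ⟪x - q, (Submodule.orthogonalProjection A.direction (x - z) : E) - (y - z)⟫ = 0 := by
      have hmem : (Submodule.orthogonalProjection A.direction (x - z) : E) - (y - z) ∈ A.direction :=
        Submodule.sub_mem _ (SetLike.coe_mem _) hd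
      have := horth
      rw [Submodule.mem_orthogonal] at this
      have h2 := this _ hmem
      have hxq : x - q = x - z - Submodule.orthogonalProjection A.direction (x - z) := by
        rw [hq]; abel
      rw [hxq, real_inner_comm]
      exact h2
    have hdecomp : x - y = (x - q) + ((Submodule.orthogonalProjection A.direction (x - z) : E) - (y - z)) := by
      rw [hq]; abel
    have hpyth : ‖x - y‖ ^ 2 = ‖x - q‖ ^ 2 + ‖(Submodule.orthogonalProjection A.direction (x - z) : E) - (y - z)‖ ^ 2 := by
      rw [hdecomp, norm_add_sq_real, hinner]; ring
    nlinarith [norm_nonneg (x - y), norm_nonneg (x - q),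
      sq_nonneg ‖(Submodule.orthogonalProjection A.direction (x - z) : E) - (y - z)‖]
  have h1 : ‖x - p x‖ = ‖x - q‖ :=
    le_antisymm ((hp x).2 q hqA) (hqmin _ (hp x).1)
  have hm : (1/2 : ℝ) • (p x - q) + q ∈ A :=
    AffineSubspace.smul_vsub_vadd_mem A _ (hp x).1 hqA hqA
  have hmge : ‖x - p x‖ ≤ ‖x - ((1/2 : ℝ) • (p x - q) + q)‖ := (hp x).2 _ hm
  have hpar := parallelogram_law_with_norm ℝ (x - p x) (x - q)
  have hsum : (x - p x) + (x - q) = (2:ℝ) • (x - ((1/2 : ℝ) • (p x - q) + q)) := by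
    module
  have hdiff : (x - p x) - (x - q) = q - p x := by abel
  have hns : ‖(x - p x) + (x - q)‖ = 2 * ‖x - ((1/2 : ℝ) • (p x - q) + q)‖ := by
    rw [hsum, norm_smul]; simp
  rw [hdiff, hns] at hpar
  have : ‖q - p x‖ = 0 := by
    nlinarith [norm_nonneg (q - p x), norm_nonneg (x - ((1/2 : ℝ) • (p x - q) + q)), mul_self_le_mul_self (norm_nonneg (x - p x)) hmge]
  have := norm_eq_zero.mp this
  have := sub_eq_zero.mp this
  rw [← this, hq]


/-- The subspace of fixed vectors of a linear isometry equivalence. -/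
def fixSub (Q : E ≃ₗᵢ[ℝ] E) : Submodule ℝ E where
  carrier := {v | Q v = v}
  add_mem' := by intro a b ha hb; simp only [Set.mem_setOf_eq] at *; rw [map_add, ha, hb]
  zero_mem' := by simp only [Set.mem_setOf_eq]; exact map_zero Q
  smul_mem' := by intro c v hv; simp only [Set.mem_setOf_eq] at *; rw [map_smul, hv]

lemma fixSub_mem {Q : E ≃ₗᵢ[ℝ] E} {v : E} : v ∈ fixSub Q ↔ Q v = v := Iff.rfl

lemma Q_mem_orth {Q : E ≃ₗᵢ[ℝ] E} {v : E} (hv : v ∈ (fixSub Q)ᗮ) : Q v ∈ (fixSub Q)ᗮ := by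
  rw [Submodule.mem_orthogonal] at *
  intro w hw
  have h1 : Q w = w := hw
  calc ⟪w, Q v⟫ = ⟪Q w, Q v⟫ := by rw [h1]
    _ = ⟪w, v⟫ := Q.inner_map_map w v
    _ = 0 := hv w hw

lemma S_mem_orth {Q : E ≃ₗᵢ[ℝ] E} {v : E} (hv : v ∈ (fixSub Q)ᗮ) :
    (2:ℝ)⁻¹ • (Q v + v) ∈ (fixSub Q)ᗮ :=
  Submodule.smul_mem _ _ (Submodule.add_mem _ (Q_mem_orth hv) hv)

lemma S_contract (Q : E ≃ₗᵢ[ℝ] E) :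
    ∃ c : ℝ, 0 ≤ c ∧ c < 1 ∧ ∀ v ∈ (fixSub Q)ᗮ, ‖(2:ℝ)⁻¹ • (Q v + v)‖ ≤ c * ‖v‖ := by
  have hlt1 : ∀ v ∈ (fixSub Q)ᗮ, ‖v‖ = 1 → ‖(2:ℝ)⁻¹ • (Q v + v)‖ < 1 := by
    intro v hv hv1
    have hQv : ‖Q v‖ = 1 := by rw [Q.norm_map, hv1]
    have hne : Q v ≠ v := by
      intro h
      have hmemF : v ∈ fixSub Q := h
      have h0 : ⟪v, v⟫ = 0 := (Submodule.mem_orthogonal _ _).mp hv v hmemF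
      have : v = 0 := inner_self_eq_zero.mp h0
      rw [this] at hv1; simp at hv1
    have hinner : ⟪Q v, v⟫ < 1 := by
      rcases lt_or_eq_of_le (real_inner_le_norm (Q v) v) with h | h
      · rw [hQv, hv1] at h; simpa using h
      · exfalso
        have h1 : ⟪Q v, v⟫ = ‖Q v‖ * ‖v‖ := by rw [hQv, hv1]; rw [hQv, hv1] at h; linarith
        have := inner_eq_norm_mul_iff_real.mp h1
        rw [hQv, hv1, one_smul, one_smul] at this
        exact hne this
    have hsq : ‖Q v + v‖ ^ 2 = 2 + 2 * ⟪Q v, v⟫ := by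
      rw [norm_add_sq_real, hQv, hv1]; ring
    have : ‖Q v + v‖ < 2 := by nlinarith [norm_nonneg (Q v + v)]
    rw [norm_smul]
    simp only [norm_inv, Real.norm_ofNat]
    linarith [this]
  set K : Set E := Metric.sphere (0:E) 1 ∩ ((fixSub Q)ᗮ : Set E) with hK
  have hKc : IsCompact K := by
    apply Metric.isCompact_of_isClosed_isBounded
    · exact (Metric.isClosed_sphere).inter (Submodule.closed_of_finiteDimensional _)
    · exact (Metric.isBounded_sphere).subset Set.inter_subset_left
  have hcont : Continuous fun v : E => ‖(2:ℝ)⁻¹ • (Q v + v)‖ := by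
    fun_prop
  rcases K.eq_empty_or_nonempty with hKe | hKne
  · refine ⟨1/2, by norm_num, by norm_num, ?_⟩
    intro v hv
    rcases eq_or_ne v 0 with rfl | hv0
    · simp
    · exfalso
      have : ‖v‖⁻¹ • v ∈ K := by
        constructor
        · simp [norm_smul, abs_of_nonneg, inv_mul_cancel₀ (norm_ne_zero_iff.mpr hv0),
            abs_of_pos (inv_pos.mpr (norm_pos_iff.mpr hv0))]
        · exact Submodule.smul_mem _ _ hv
      rw [hKe] at this; exact this
  · obtain ⟨v0, hv0K, hv0max'⟩ := hKc.exists_isMaxOn hKne hcont.continuousOn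
    have hv0max : ∀ w ∈ K, ‖(2:ℝ)⁻¹ • (Q w + w)‖ ≤ ‖(2:ℝ)⁻¹ • (Q v0 + v0)‖ := fun w hw => hv0max' hw
    refine ⟨‖(2:ℝ)⁻¹ • (Q v0 + v0)‖, norm_nonneg _, ?_, ?_⟩
    · exact hlt1 v0 hv0K.2 (by simpa using mem_sphere_zero_iff_norm.mp hv0K.1)
    · intro v hv
      rcases eq_or_ne v 0 with rfl | hvne
      · simp
      · have hnv : (0:ℝ) < ‖v‖ := norm_pos_iff.mpr hvne
        set w : E := ‖v‖⁻¹ • v with hw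
        have hwK : w ∈ K := by
          constructor
          · simp [hw, norm_smul, abs_of_pos (inv_pos.mpr hnv), inv_mul_cancel₀ hnv.ne']
          · exact Submodule.smul_mem _ _ hv
        have hscale : (2:ℝ)⁻¹ • (Q v + v) = ‖v‖ • ((2:ℝ)⁻¹ • (Q w + w)) := by
          rw [hw, map_smul]
          match_scalars <;> field_simp
        rw [hscale, norm_smul, Real.norm_eq_abs, abs_of_pos hnv, mul_comm]
        exact mul_le_mul_of_nonneg_right (hv0max w hwK) hnv.le
end aux


/-- Linear convergence of Douglas–Rachford for two affine subspaces `A, B` of ℝⁿ with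
nonempty intersection: given the (single-valued) nearest-point projections `pA, pB` onto
`A` and `B`, the Douglas–Rachford iteration `x^{k+1} = ½(R_A R_B x^k + x^k)` (with
`R_Ω = 2 P_Ω - Id`) converges from any starting point to a fixed point `x̄` of the
Douglas–Rachford operator at a linear rate, and `P_B x̄ ∈ A ∩ B`. -/
theorem stmt18 {n : ℕ} (A B : AffineSubspace ℝ (EuclideanSpace ℝ (Fin n)))
    (hAB : ((A : Set (EuclideanSpace ℝ (Fin n))) ∩ B).Nonempty)
    (pA pB : EuclideanSpace ℝ (Fin n) → EuclideanSpace ℝ (Fin n))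
    (hpA : ∀ x, pA x ∈ A ∧ ∀ y ∈ A, ‖x - pA x‖ ≤ ‖x - y‖)
    (hpB : ∀ x, pB x ∈ B ∧ ∀ y ∈ B, ‖x - pB x‖ ≤ ‖x - y‖)
    (T : EuclideanSpace ℝ (Fin n) → EuclideanSpace ℝ (Fin n))
    (hT : ∀ x, T x = (1/2 : ℝ) •
      ((((2:ℝ) • pA ((2:ℝ) • pB x - x) - ((2:ℝ) • pB x - x))) + x))
    (x : ℕ → EuclideanSpace ℝ (Fin n)) (hx : ∀ k, x (k + 1) = T (x k)) :
    ∃ xbar, T xbar = xbar ∧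
      (∃ c, 0 ≤ c ∧ c < 1 ∧ ∃ C > (0:ℝ), ∀ k, ‖x k - xbar‖ ≤ C * c ^ k) ∧
      pB xbar ∈ (A : Set (EuclideanSpace ℝ (Fin n))) ∩ B := by
  obtain ⟨z, hzA, hzB⟩ := hAB
  have hpAeq : ∀ y, pA y = z + (Submodule.orthogonalProjection A.direction (y - z) : EuclideanSpace ℝ (Fin n)) :=
    nearest_eq A hzA pA hpA
  have hpBeq : ∀ y, pB y = z + (Submodule.orthogonalProjection B.direction (y - z) : EuclideanSpace ℝ (Fin n)) :=
    nearest_eq B hzB pB hpB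
  set Q : EuclideanSpace ℝ (Fin n) ≃ₗᵢ[ℝ] EuclideanSpace ℝ (Fin n) :=
    (Submodule.reflection B.direction).trans (Submodule.reflection A.direction) with hQdef
  have hQ : ∀ v, Q v =
      (2:ℝ) • (Submodule.orthogonalProjection A.direction
          ((2:ℝ) • (Submodule.orthogonalProjection B.direction v : EuclideanSpace ℝ (Fin n)) - v) : EuclideanSpace ℝ (Fin n))
        - ((2:ℝ) • (Submodule.orthogonalProjection B.direction v : EuclideanSpace ℝ (Fin n)) - v) := by
    intro v
    simp only [hQdef, LinearIsometryEquiv.trans_apply, Submodule.reflection_apply, Submodule.starProjection_apply, two_smul]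
  set S : EuclideanSpace ℝ (Fin n) → EuclideanSpace ℝ (Fin n) :=
    fun v => (2:ℝ)⁻¹ • (Q v + v) with hSdef
  have hTy : ∀ y, T y = z + S (y - z) := by
    intro y
    rw [hT, hpBeq y, hpAeq]
    have harg : (2:ℝ) • (z + (Submodule.orthogonalProjection B.direction (y - z) : EuclideanSpace ℝ (Fin n))) - y - z
        = (2:ℝ) • (Submodule.orthogonalProjection B.direction (y - z) : EuclideanSpace ℝ (Fin n)) - (y - z) := by
      module
    rw [harg, hSdef]
    simp only [hQ (y - z)]
    module
  obtain ⟨c, hc0, hc1, hcb⟩ := S_contract Q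
  set w : EuclideanSpace ℝ (Fin n) := (Submodule.orthogonalProjection (fixSub Q) (x 0 - z) : EuclideanSpace ℝ (Fin n)) with hw
  set xbar : EuclideanSpace ℝ (Fin n) := z + w with hxbar
  have hwF : Q w = w := fixSub_mem.mp (SetLike.coe_mem _)
  have hSw : S w = w := by rw [hSdef]; simp only [hwF]; module
  have hu : x 0 - xbar ∈ (fixSub Q)ᗮ := by
    have h := Submodule.sub_starProjection_mem_orthogonal (K := fixSub Q) (x 0 - z)
    have : x 0 - xbar = x 0 - z - w := by rw [hxbar]; abel
    rw [this]
    exact h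
  have hfix : T xbar = xbar := by
    rw [hTy, hxbar, add_sub_cancel_left, hSw]
  have hstep : ∀ k, x (k + 1) - xbar = S (x k - xbar) := by
    intro k
    have hlin : ∀ a b, S a - S b = S (a - b) := by
      intro a b; rw [hSdef]; simp only [map_sub]; module
    rw [hx k, hTy]
    calc z + S (x k - z) - xbar = S (x k - z) - S w := by rw [hxbar, hSw]; abel
      _ = S (x k - z - w) := hlin _ _
      _ = S (x k - xbar) := by rw [show x k - z - w = x k - xbar by rw [hxbar]; abel]
  have hbound : ∀ k, x k - xbar ∈ (fixSub Q)ᗮ ∧ ‖x k - xbar‖ ≤ c ^ k * ‖x 0 - xbar‖ := by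
    intro k
    induction k with
    | zero => exact ⟨hu, by simp⟩
    | succ k ih =>
      rw [hstep k]
      refine ⟨S_mem_orth ih.1, ?_⟩
      calc ‖(2:ℝ)⁻¹ • (Q (x k - xbar) + (x k - xbar))‖ ≤ c * ‖x k - xbar‖ := hcb _ ih.1
        _ ≤ c * (c ^ k * ‖x 0 - xbar‖) := mul_le_mul_of_nonneg_left ih.2 hc0
        _ = c ^ (k + 1) * ‖x 0 - xbar‖ := by ring
  have hAint : pB xbar ∈ (A : Set (EuclideanSpace ℝ (Fin n))) ∩ B := by
    have h3 := (hT xbar).symm.trans hfix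
    set y : EuclideanSpace ℝ (Fin n) := (2:ℝ) • pB xbar - xbar with hy
    have h4 : (2:ℝ) • ((1/2 : ℝ) • ((2:ℝ) • pA y - y + xbar)) = (2:ℝ) • xbar := by
      rw [h3]
    rw [smul_smul] at h4
    norm_num at h4
    have h5 : (2:ℝ) • pA y = (2:ℝ) • pB xbar := by
      calc (2:ℝ) • pA y = ((2:ℝ) • pA y - y + xbar) + y - xbar := by abel
        _ = (2:ℝ) • xbar + y - xbar := by rw [h4]
        _ = (2:ℝ) • pB xbar := by rw [hy]; module
    have h6 : pA y = pB xbar := smul_right_injective _ (two_ne_zero) h5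
    exact ⟨by rw [← h6]; exact (hpA y).1, (hpB xbar).1⟩
  refine ⟨xbar, hfix, ⟨c, hc0, hc1, ‖x 0 - xbar‖ + 1, by positivity, ?_⟩, hAint⟩
  intro k
  calc ‖x k - xbar‖ ≤ c ^ k * ‖x 0 - xbar‖ := (hbound k).2
    _ ≤ (‖x 0 - xbar‖ + 1) * c ^ k := by
        nlinarith [pow_nonneg hc0 k, norm_nonneg (x 0 - xbar)]
end
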